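/- arXiv:1610.04505 — 7 statements merged into one kernel-verified Lean document; each statement's English description precedes it below -/
import Mathlib

section
/- Let O be an order in a number field K, m ⊆ O a nonzero ideal contained in the conductor of O, and x ∈ K^×. If the fractional O-ideal xO can be written as a·b^{-1} with a, b integral O-ideals coprime to m, then x = x₀/x_∞ with x₀ ∈ O coprime to m and x_∞ ∈ O satisfying x_∞ ≡ 1 (mod m). -/
/-- Let `O` be an order in a number field `K`, `m ⊆ O` a nonzero ideal contained in
the conductor of `O`, and `x ∈ K^×`.  If the fractional `O`-ideal `xO` can be written
as `a·b⁻¹` with `a`, `b` integral `O`-ideals coprime to `m` (equivalently, `x·b = a`),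
then `x = x₀/x_∞` with `x₀ ∈ O` coprime to `m` and `x_∞ ∈ O` with `x_∞ ≡ 1 (mod m)`. -/
theorem unit_modstar_of_coprime_factorisation (K : Type*) [Field K] [NumberField K]
    (O : Subalgebra ℤ K) (hfg : O.toSubmodule.FG)
    (hfull : Submodule.span ℚ (O : Set K) = ⊤) [IsFractionRing O K]
    (m : Ideal O) (hm0 : m ≠ ⊥)
    (hcond : ∀ y ∈ m, ∀ z ∈ integralClosure ℤ K, (y : K) * z ∈ O)
    (x : K) (hx : x ≠ 0)
    (h : ∃ a b : Ideal O, a ⊔ m = ⊤ ∧ b ⊔ m = ⊤ ∧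
      FractionalIdeal.spanSingleton (nonZeroDivisors O) x *
        (b : FractionalIdeal (nonZeroDivisors O) K) =
        (a : FractionalIdeal (nonZeroDivisors O) K)) :
    ∃ x₀ xinf : O, Ideal.span {x₀} ⊔ m = ⊤ ∧ xinf - 1 ∈ m ∧
      (x₀ : K) = x * (xinf : K) := by
  obtain ⟨a, b, ha, hb, hab⟩ := h
  have inj : Function.Injective (algebraMap O K) := IsFractionRing.injective O K
  -- 1 = y + z with y ∈ b, z ∈ m
  obtain ⟨y, hy, z, hz, hyz⟩ := Submodule.mem_sup.mp (hb ▸ Submodule.mem_top : (1 : O) ∈ b ⊔ m)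
  -- 1 = u + v with u ∈ a, v ∈ m
  obtain ⟨u, hu, v, hv, huv⟩ := Submodule.mem_sup.mp (ha ▸ Submodule.mem_top : (1 : O) ∈ a ⊔ m)
  -- x * y ∈ a
  have hyb : (algebraMap O K y) ∈ (b : FractionalIdeal (nonZeroDivisors O) K) :=
    FractionalIdeal.mem_coeIdeal_of_mem _ hy
  have hxy : x * (algebraMap O K y) ∈ (a : FractionalIdeal (nonZeroDivisors O) K) := by
    rw [← hab]
    exact (FractionalIdeal.mem_singleton_mul).mpr ⟨_, hyb, rfl⟩
  obtain ⟨w, hw, hwxy⟩ := (FractionalIdeal.mem_coeIdeal _).mp hxy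
  -- u = x * β for some β ∈ b
  have hua : (algebraMap O K u) ∈ (a : FractionalIdeal (nonZeroDivisors O) K) :=
    FractionalIdeal.mem_coeIdeal_of_mem _ hu
  rw [← hab] at hua
  obtain ⟨β, hβb, hβ⟩ := FractionalIdeal.mem_singleton_mul.mp hua
  obtain ⟨β', hβ', hβ'e⟩ := (FractionalIdeal.mem_coeIdeal _).mp hβb
  refine ⟨w, y, ?_, ?_, ?_⟩
  · -- span {w} ⊔ m = ⊤
    rw [Ideal.eq_top_iff_one]
    have hkey : w * β' = u * y := by
      apply inj
      rw [map_mul, map_mul, hwxy, hβ'e, hβ]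
      ring
    have h1 : (1 : O) - w * β' ∈ m := by
      rw [hkey]
      have : (1 : O) - u * y = u * (1 - y) + (1 - u) := by ring
      rw [this]
      have h2 : (1 : O) - y = z := by rw [← hyz]; ring
      have h3 : (1 : O) - u = v := by rw [← huv]; ring
      exact Submodule.add_mem m (m.mul_mem_left u (h2 ▸ hz)) (h3 ▸ hv)
    have h4 : w * β' ∈ Ideal.span {w} := Ideal.mul_mem_right _ _ (Ideal.mem_span_singleton_self w)
    have : (1 : O) = w * β' + (1 - w * β') := by ring
    rw [this]
    exact Submodule.add_mem _ (Ideal.mem_sup_left h4) (Ideal.mem_sup_right h1)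
  · -- y ≡ 1 mod m
    have : y - 1 = -z := by rw [← hyz]; ring
    rw [this]
    exact Submodule.neg_mem m hz
  · -- (w : K) = x * y
    have : (algebraMap O K w : K) = x * (algebraMap O K y) := hwxy
    simpa using this
end

section
/- Let K₀ be a totally real field with ring of integers O_{K₀}, m ⊆ O_{K₀} a nonzero ideal, K a CM field with maximal real subfield K₀, and z ∈ K \ K₀. Then there exist A, B, C ∈ O_{K₀} with A totally positive, A z² + B z + C = 0, and A·O_{K₀} + B·O_{K₀} + C·O_{K₀} + m = O_{K₀}. -/
open NumberField nonZeroDivisors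

open FractionalIdeal in
/-- Key ideal-theoretic lemma over a Dedekind domain `R` with fraction field `F`:
given `b c : F` and a nonzero ideal `m`, there are `lam : R` and a nonzero ideal `N`
such that for every `μ ∈ N`, `A := lam + μ` satisfies: `A*b` and `A*c` are integral,
and `(A) + (A*b) + (A*c) + m = ⊤`. -/
theorem exists_semiprimitive_aux (R F : Type*) [CommRing R] [IsDedekindDomain R]
    [Field F] [Algebra R F] [IsFractionRing R F]
    (b c : F) (m : Ideal R) (hm0 : m ≠ ⊥) :
    ∃ (N : Ideal R) (lam : R), N ≠ ⊥ ∧ ∀ μ ∈ N, ∃ B C : R,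
      algebraMap R F B = algebraMap R F (lam + μ) * b ∧
      algebraMap R F C = algebraMap R F (lam + μ) * c ∧
      (Ideal.span {lam + μ} ⊔ Ideal.span {B} ⊔ Ideal.span {C} ⊔ m = ⊤) := by
  classical
  set J : FractionalIdeal R⁰ F := 1 ⊔ spanSingleton R⁰ b ⊔ spanSingleton R⁰ c with hJdef
  have h1J : (1 : FractionalIdeal R⁰ F) ≤ J := le_sup_of_le_left le_sup_left
  have h1memJ : (1 : F) ∈ J := h1J (one_mem_one R⁰)
  have hJ0 : J ≠ 0 := by
    intro h
    rw [h, mem_zero_iff] at h1memJ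
    exact one_ne_zero h1memJ
  have hJinv : J * J⁻¹ = 1 := mul_inv_cancel₀ hJ0
  have hbJ : b ∈ J :=
    (le_sup_of_le_left le_sup_right : spanSingleton R⁰ b ≤ J) (mem_spanSingleton_self R⁰ b)
  have hcJ : c ∈ J :=
    (le_sup_right : spanSingleton R⁰ c ≤ J) (mem_spanSingleton_self R⁰ c)
  have hD1 : J⁻¹ ≤ 1 := by
    intro x hx
    have h := (mem_inv_iff hJ0).mp hx 1 h1memJ
    rwa [mul_one] at h
  obtain ⟨D, hD⟩ := le_one_iff_exists_coeIdeal.mp hD1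
  have hD0 : D ≠ ⊥ := by
    rintro rfl
    rw [coeIdeal_bot] at hD
    rw [← hD, mul_zero] at hJinv
    exact one_ne_zero hJinv.symm
  -- integrality of products with b, c for elements of D
  have hkey : ∀ x : R, x ∈ D → ∀ y ∈ J, ∃ B : R, algebraMap R F B = algebraMap R F x * y := by
    intro x hx y hy
    have hx' : algebraMap R F x ∈ (D : FractionalIdeal R⁰ F) :=
      (mem_coeIdeal R⁰).mpr ⟨x, hx, rfl⟩
    rw [hD] at hx'
    have := (mem_inv_iff hJ0).mp hx' y hy
    obtain ⟨B, hB⟩ := (mem_one_iff R⁰).mp this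
    exact ⟨B, hB⟩
  -- the finite set of primes over m
  set s : Finset (Ideal R) := (UniqueFactorizationMonoid.normalizedFactors m).toFinset with hs
  have hmem_s : ∀ P : Ideal R, P ∈ s ↔ P.IsPrime ∧ m ≤ P := by
    intro P
    rw [hs, Multiset.mem_toFinset, Ideal.mem_normalizedFactors_iff hm0]
  have hs_ne_bot : ∀ P ∈ s, P ≠ ⊥ := by
    intro P hP
    have := UniqueFactorizationMonoid.prime_of_normalized_factor P
      (Multiset.mem_toFinset.mp hP)
    exact this.ne_zero
  -- choose λ_P ∈ D * ∏_{Q ≠ P} Q, λ_P ∉ D * P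
  have hne : ∀ P ∈ s, ¬ (D * ∏ Q ∈ s.erase P, Q ≤ D * P) := by
    intro P hP hle
    rw [← Ideal.dvd_iff_le, mul_dvd_mul_iff_left hD0, Ideal.dvd_iff_le] at hle
    obtain ⟨Q, hQ, hQP⟩ := (((hmem_s P).mp hP).1.prod_le).mp hle
    have hQs : Q ∈ s := Finset.mem_of_mem_erase hQ
    have hQmax : Q.IsMaximal :=
      Ideal.IsPrime.isMaximal ((hmem_s Q).mp hQs).1 (hs_ne_bot Q hQs)
    exact (Finset.ne_of_mem_erase hQ) (hQmax.eq_of_le ((hmem_s P).mp hP).1.ne_top hQP)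
  choose! f hf1 hf2 using fun P hP => SetLike.not_le_iff_exists.mp (hne P hP)
  set lam : R := ∑ P ∈ s, f P with hlam
  have hlamD : lam ∈ D := by
    refine Ideal.sum_mem _ fun P hP => ?_
    exact Ideal.mul_le_left (hf1 P hP)
  have hlamP : ∀ P ∈ s, lam ∉ D * P := by
    intro P hP hmem
    have hrest : ∑ Q ∈ s.erase P, f Q ∈ D * P := by
      refine Ideal.sum_mem _ fun Q hQ => ?_
      have hQs : Q ∈ s := Finset.mem_of_mem_erase hQ
      have hPQ : P ∈ s.erase Q :=
        Finset.mem_erase.mpr ⟨(Finset.ne_of_mem_erase hQ).symm, hP⟩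
      have hprod : (∏ T ∈ s.erase Q, T) ≤ P :=
        Ideal.le_of_dvd (Finset.dvd_prod_of_mem _ hPQ)
      exact Ideal.mul_mono_right hprod (hf1 Q hQs)
    have : f P ∈ D * P := by
      have := Finset.add_sum_erase s f hP
      have heq : f P = lam - ∑ Q ∈ s.erase P, f Q := by
        rw [hlam, ← this]; ring
      rw [heq]
      exact Submodule.sub_mem _ hmem hrest
    exact hf2 P hP this
  refine ⟨D * m, lam, ?_, ?_⟩
  · exact mul_ne_zero hD0 hm0
  intro μ hμ
  have hμD : μ ∈ D := Ideal.mul_le_left hμ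
  have hAD : lam + μ ∈ D := Submodule.add_mem _ hlamD hμD
  obtain ⟨B, hB⟩ := hkey _ hAD b hbJ
  obtain ⟨C, hC⟩ := hkey _ hAD c hcJ
  refine ⟨B, C, hB, hC, ?_⟩
  by_contra h
  obtain ⟨P, hPmax, hle⟩ := Ideal.exists_le_maximal _ h
  have hmP : m ≤ P := le_sup_right.trans hle
  have hPs : P ∈ s := (hmem_s P).mpr ⟨hPmax.isPrime, hmP⟩
  have hAP : lam + μ ∈ P :=
    ((le_sup_left.trans le_sup_left).trans le_sup_left).trans hle
      (Ideal.mem_span_singleton_self _)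
  have hBP : B ∈ P := ((le_sup_right.trans le_sup_left).trans le_sup_left).trans hle
      (Ideal.mem_span_singleton_self _)
  have hCP : C ∈ P := (le_sup_right.trans le_sup_left).trans hle
      (Ideal.mem_span_singleton_self _)
  have hsle : spanSingleton R⁰ (algebraMap R F (lam + μ)) * J ≤
      (P : FractionalIdeal R⁰ F) := by
    rw [hJdef, sup_eq_add, sup_eq_add, mul_add, mul_add, mul_one,
      spanSingleton_mul_spanSingleton, spanSingleton_mul_spanSingleton, ← hB, ← hC,
      ← sup_eq_add, ← sup_eq_add]
    refine sup_le (sup_le ?_ ?_) ?_ <;> rw [spanSingleton_le_iff_mem]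
    · exact (mem_coeIdeal R⁰).mpr ⟨_, hAP, rfl⟩
    · exact (mem_coeIdeal R⁰).mpr ⟨_, hBP, rfl⟩
    · exact (mem_coeIdeal R⁰).mpr ⟨_, hCP, rfl⟩
  have h2le : spanSingleton R⁰ (algebraMap R F (lam + μ)) ≤
      ((P * D : Ideal R) : FractionalIdeal R⁰ F) := by
    calc spanSingleton R⁰ (algebraMap R F (lam + μ))
        = spanSingleton R⁰ (algebraMap R F (lam + μ)) * (J * J⁻¹) := by rw [hJinv, mul_one]
      _ = (spanSingleton R⁰ (algebraMap R F (lam + μ)) * J) * J⁻¹ := by ring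
      _ ≤ (P : FractionalIdeal R⁰ F) * J⁻¹ :=
          mul_le.mpr fun i hi j hj => mul_mem_mul (hsle hi) hj
      _ = (P : FractionalIdeal R⁰ F) * (D : FractionalIdeal R⁰ F) := by rw [hD]
      _ = ((P * D : Ideal R) : FractionalIdeal R⁰ F) := (coeIdeal_mul P D).symm
  have hADP : lam + μ ∈ D * P := by
    have hmem := h2le (mem_spanSingleton_self R⁰ _)
    obtain ⟨y, hy, hy'⟩ := (mem_coeIdeal R⁰).mp hmem
    have := IsFractionRing.injective R F hy'
    rw [mul_comm]
    exact this ▸ hy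
  have hμDP : μ ∈ D * P := Ideal.mul_mono_right hmP hμ
  refine hlamP P hPs ?_
  have := Submodule.sub_mem _ hADP hμDP
  simpa using this

/-- Let `K₀` be totally real, `m ⊆ 𝓞 K₀` a nonzero ideal, `K` a CM field with maximal
real subfield `K₀`, and `z ∈ K \ K₀`.  Then there are `A, B, C ∈ 𝓞 K₀` with `A`
totally positive, `A z² + B z + C = 0` and `(A) + (B) + (C) + m = 𝓞 K₀`
(semiprimitivity modulo `m`). -/
theorem exists_semiprimitive_quadratic
    (K₀ K : Type*) [Field K₀] [NumberField K₀] [Field K] [NumberField K] [Algebra K₀ K]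
    (htr : ∀ v : InfinitePlace K₀, v.IsReal)
    (hti : ∀ v : InfinitePlace K, v.IsComplex)
    (h2 : Module.finrank K₀ K = 2)
    (m : Ideal (𝓞 K₀)) (hm0 : m ≠ ⊥)
    (z : K) (hz : z ∉ (algebraMap K₀ K).range) :
    ∃ A B C : 𝓞 K₀, (∀ φ : K₀ →+* ℝ, 0 < φ (A : K₀)) ∧
      algebraMap (𝓞 K₀) K A * z ^ 2 + algebraMap (𝓞 K₀) K B * z +
        algebraMap (𝓞 K₀) K C = 0 ∧
      Ideal.span {A} ⊔ Ideal.span {B} ⊔ Ideal.span {C} ⊔ m = ⊤ := by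
  classical
  have hfd : Module.Finite K₀ K := Module.finite_of_finrank_eq_succ (n := 1) (by omega)
  have hzint : IsIntegral K₀ z := IsIntegral.of_finite K₀ z
  have hp0 : minpoly K₀ z ≠ 0 := minpoly.ne_zero hzint
  have hdeg : (minpoly K₀ z).natDegree = 2 := by
    have hle : (minpoly K₀ z).natDegree ≤ 2 := h2 ▸ minpoly.natDegree_le z
    have hpos : 0 < (minpoly K₀ z).natDegree := minpoly.natDegree_pos hzint
    have hne1 : (minpoly K₀ z).natDegree ≠ 1 := by
      intro h1
      have hdeg1 : (minpoly K₀ z).degree = 1 := by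
        rw [Polynomial.degree_eq_natDegree hp0, h1]
        rfl
      exact hz (minpoly.degree_eq_one_iff.mp hdeg1)
    omega
  set b : K₀ := (minpoly K₀ z).coeff 1 with hbdef
  set c : K₀ := (minpoly K₀ z).coeff 0 with hcdef
  have hzeq : z ^ 2 + algebraMap K₀ K b * z + algebraMap K₀ K c = 0 := by
    have h := minpoly.aeval K₀ z
    rw [Polynomial.aeval_eq_sum_range, hdeg] at h
    have hmonic := (minpoly.monic hzint).coeff_natDegree
    rw [hdeg] at hmonic
    rw [Finset.sum_range_succ, Finset.sum_range_succ, Finset.sum_range_succ,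
      Finset.sum_range_zero, hmonic] at h
    simp only [Algebra.smul_def, map_one, one_mul, pow_zero, pow_one, mul_one,
      zero_add] at h
    linear_combination h
  obtain ⟨N, lam, hN0, hNP⟩ := exists_semiprimitive_aux (𝓞 K₀) K₀ b c m hm0
  obtain ⟨ν, hνN, hν0⟩ := Submodule.exists_mem_ne_zero_of_ne_bot hN0
  have hνK : (ν : K₀) ≠ 0 := by
    rw [RingOfIntegers.coe_eq_algebraMap, Ne, RingOfIntegers.coe_eq_zero_iff]
    exact hν0
  have hex : ∀ φ : K₀ →+* ℝ, ∃ n : ℕ, 0 < φ (lam : K₀) + n * φ (ν : K₀) ^ 2 := by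
    intro φ
    have h1 : φ (ν : K₀) ≠ 0 := fun h => hνK (φ.injective (by rw [h, map_zero]))
    have hsq : 0 < φ (ν : K₀) ^ 2 :=
      lt_of_le_of_ne (sq_nonneg _) (Ne.symm (pow_ne_zero 2 h1))
    obtain ⟨n, hn⟩ := exists_nat_gt (-(φ (lam : K₀)) / φ (ν : K₀) ^ 2)
    refine ⟨n, ?_⟩
    rw [div_lt_iff₀ hsq] at hn
    linarith
  choose f hf using hex
  set k : ℕ := Finset.univ.sup f with hk
  have hμN : (k : 𝓞 K₀) * ν ^ 2 ∈ N :=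
    Ideal.mul_mem_left _ _ (by rw [sq]; exact Ideal.mul_mem_left _ _ hνN)
  obtain ⟨B, C, hB, hC, hcop⟩ := hNP _ hμN
  refine ⟨lam + (k : 𝓞 K₀) * ν ^ 2, B, C, ?_, ?_, hcop⟩
  · intro φ
    have hcoe : ((lam + (k : 𝓞 K₀) * ν ^ 2 : 𝓞 K₀) : K₀)
        = (lam : K₀) + (k : K₀) * (ν : K₀) ^ 2 := by
      simp [RingOfIntegers.coe_eq_algebraMap, map_add, map_mul, map_pow, map_natCast]
    rw [hcoe, map_add, map_mul, map_pow, map_natCast]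
    have hfk : f φ ≤ k := Finset.le_sup (Finset.mem_univ φ)
    have h1 := hf φ
    have hsq : (0:ℝ) ≤ φ (ν : K₀) ^ 2 := sq_nonneg _
    have h2' : (f φ : ℝ) * φ (ν : K₀) ^ 2 ≤ (k : ℝ) * φ (ν : K₀) ^ 2 := by
      apply mul_le_mul_of_nonneg_right _ hsq
      exact_mod_cast hfk
    linarith
  · rw [IsScalarTower.algebraMap_apply (𝓞 K₀) K₀ K, IsScalarTower.algebraMap_apply (𝓞 K₀) K₀ K B,
      IsScalarTower.algebraMap_apply (𝓞 K₀) K₀ K C, hB, hC, map_mul, map_mul]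
    linear_combination (algebraMap K₀ K (algebraMap (𝓞 K₀) K₀ (lam + (k : 𝓞 K₀) * ν ^ 2))) * hzeq
end

section
/- Let K be a CM field with maximal real subfield K₀, and let z ∈ K \ K₀ be a root of A X² + B X + C with A, B, C ∈ O_{K₀}. Set d = gcd(A·O_{K₀}, B·O_{K₀}, C·O_{K₀}) and b = z·O_{K₀} + O_{K₀}. Then the ring of multipliers {x ∈ K : x·b ⊆ b} of b equals d^{-1}·A z + O_{K₀}, where d^{-1} = {x ∈ K₀ : x·d ⊆ O_{K₀}}. -/
open NumberField

/-- Let `K/K₀` be a CM extension and `z ∈ K \ K₀` a root of `A X² + B X + C` with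
`A, B, C ∈ 𝓞 K₀`, `A ≠ 0`.  With `d = (A, B, C)` and `b = z·𝓞 K₀ + 𝓞 K₀`, the ring
of multipliers `{x ∈ K : x·b ⊆ b}` equals `d⁻¹·A z + 𝓞 K₀`,
where `d⁻¹ = {x ∈ K₀ : x·d ⊆ 𝓞 K₀}`. -/
theorem multiplier_ring_eq (K₀ K : Type*) [Field K₀] [NumberField K₀]
    [Field K] [NumberField K] [Algebra K₀ K]
    (htr : ∀ v : InfinitePlace K₀, v.IsReal)
    (hti : ∀ v : InfinitePlace K, v.IsComplex)
    (h2 : Module.finrank K₀ K = 2)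
    (z : K) (hz : z ∉ (algebraMap K₀ K).range)
    (A B C : 𝓞 K₀) (hA : A ≠ 0)
    (hroot : algebraMap (𝓞 K₀) K A * z ^ 2 + algebraMap (𝓞 K₀) K B * z +
      algebraMap (𝓞 K₀) K C = 0) :
    {x : K | ∀ y ∈ Submodule.span (𝓞 K₀) {z, 1}, x * y ∈ Submodule.span (𝓞 K₀) {z, 1}}
      = {x : K | ∃ a : K₀,
          (∀ y ∈ Ideal.span ({A, B, C} : Set (𝓞 K₀)), a * (y : K₀) ∈
            (algebraMap (𝓞 K₀) K₀).range) ∧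
          ∃ t : 𝓞 K₀, x = algebraMap K₀ K a * (algebraMap (𝓞 K₀) K A * z) +
            algebraMap (𝓞 K₀) K t} := by
  have hcoe : ∀ u : 𝓞 K₀, (u : K₀) = algebraMap (𝓞 K₀) K₀ u := fun _ => rfl
  have hKinj : Function.Injective (algebraMap K₀ K) := (algebraMap K₀ K).injective
  have hmap : ∀ u : 𝓞 K₀, algebraMap (𝓞 K₀) K u = algebraMap K₀ K (u : K₀) := by
    intro u; rw [IsScalarTower.algebraMap_apply (𝓞 K₀) K₀ K]
  have hinj : Function.Injective (algebraMap (𝓞 K₀) K) := by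
    intro u v h
    rw [hmap, hmap] at h
    exact RingOfIntegers.coe_injective (hKinj h)
  have hA0 : (A : K₀) ≠ 0 := fun h => hA (RingOfIntegers.coe_injective (by simpa using h))
  -- linear independence of {z, 1} over K₀
  have indep : ∀ s t : K₀, algebraMap K₀ K s * z + algebraMap K₀ K t = 0 → s = 0 ∧ t = 0 := by
    intro s t h
    by_cases hs : s = 0
    · subst hs
      simp only [map_zero, zero_mul, zero_add] at h
      exact ⟨rfl, hKinj (by simpa using h)⟩
    · exfalso
      apply hz
      refine ⟨-t / s, ?_⟩
      have hs' : algebraMap K₀ K s ≠ 0 := fun h0 => hs (hKinj (by simpa using h0))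
      rw [map_div₀, map_neg]
      field_simp
      linear_combination -h
  have key : ∀ s t s' t' : 𝓞 K₀,
      algebraMap (𝓞 K₀) K s * z + algebraMap (𝓞 K₀) K t
        = algebraMap (𝓞 K₀) K s' * z + algebraMap (𝓞 K₀) K t' → s = s' ∧ t = t' := by
    intro s t s' t' h
    have h' : algebraMap K₀ K ((s : K₀) - (s' : K₀)) * z
        + algebraMap K₀ K ((t : K₀) - (t' : K₀)) = 0 := by
      rw [map_sub, map_sub, ← hmap, ← hmap, ← hmap, ← hmap]
      linear_combination h
    obtain ⟨h1, h2'⟩ := indep _ _ h'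
    constructor
    · exact RingOfIntegers.coe_injective (by linear_combination (h1 : (s:K₀) - s' = 0))
    · exact RingOfIntegers.coe_injective (by linear_combination (h2' : (t:K₀) - t' = 0))
  have hzmem : z ∈ Submodule.span (𝓞 K₀) ({z, 1} : Set K) :=
    Submodule.subset_span (by simp)
  have h1mem : (1 : K) ∈ Submodule.span (𝓞 K₀) ({z, 1} : Set K) :=
    Submodule.subset_span (by simp)
  ext x
  simp only [Set.mem_setOf_eq]
  constructor
  · intro hx
    obtain ⟨u, v, huv⟩ := Submodule.mem_span_pair.mp (by simpa using hx 1 h1mem)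
    obtain ⟨p, q, hpq⟩ := Submodule.mem_span_pair.mp (hx z hzmem)
    rw [Algebra.smul_def, Algebra.smul_def, mul_one] at huv hpq
    -- A * (x * z) two ways
    have hxz : algebraMap (𝓞 K₀) K (v * A - u * B) * z + algebraMap (𝓞 K₀) K (-(u * C))
        = algebraMap (𝓞 K₀) K (A * p) * z + algebraMap (𝓞 K₀) K (A * q) := by
      simp only [map_mul, map_sub, map_neg]
      have e1 : algebraMap (𝓞 K₀) K A * (x * z)
          = algebraMap (𝓞 K₀) K A * (algebraMap (𝓞 K₀) K p * z + algebraMap (𝓞 K₀) K q) := by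
        rw [hpq]
      rw [← huv] at e1
      linear_combination e1 - (algebraMap (𝓞 K₀) K u) * hroot
    obtain ⟨e1, e2⟩ := key _ _ _ _ hxz
    have e1' : (v:K₀)*(A:K₀) - (u:K₀)*(B:K₀) = (A:K₀)*(p:K₀) := by
      exact_mod_cast congrArg (fun w : 𝓞 K₀ => (w : K₀)) e1
    have e2' : -((u:K₀)*(C:K₀)) = (A:K₀)*(q:K₀) := by
      exact_mod_cast congrArg (fun w : 𝓞 K₀ => (w : K₀)) e2
    refine ⟨(u : K₀) / (A : K₀), ?_, v, ?_⟩
    · intro y hy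
      have hAmul : (u : K₀) / (A : K₀) * (A : K₀) = (u : K₀) := by field_simp
      have hB : (u : K₀) / (A : K₀) * (B : K₀) = ((v - p : 𝓞 K₀) : K₀) := by
        push_cast
        field_simp
        linear_combination -e1'
      have hC : (u : K₀) / (A : K₀) * (C : K₀) = ((-q : 𝓞 K₀) : K₀) := by
        push_cast
        field_simp
        linear_combination -e2'
      -- now span induction
      induction hy using Submodule.span_induction with
      | mem w hw =>
        rcases hw with h | h | h
        · subst h; exact ⟨u, hAmul.symm⟩
        · subst h; exact ⟨v - p, hB.symm⟩
        · subst h; exact ⟨-q, hC.symm⟩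
      | zero => exact ⟨0, by simp⟩
      | add w₁ w₂ _ _ ih1 ih2 =>
        obtain ⟨c₁, hc₁⟩ := ih1
        obtain ⟨c₂, hc₂⟩ := ih2
        refine ⟨c₁ + c₂, ?_⟩
        simp only [hcoe] at hc₁ hc₂ ⊢
        rw [map_add, map_add, mul_add, ← hc₁, ← hc₂]
      | smul r w _ ih =>
        obtain ⟨c, hc⟩ := ih
        refine ⟨r * c, ?_⟩
        simp only [hcoe, smul_eq_mul] at hc ⊢
        rw [map_mul, map_mul]
        linear_combination (algebraMap (𝓞 K₀) K₀ r) * hc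
    · have heq : algebraMap K₀ K ((u : K₀) / (A : K₀)) * (algebraMap (𝓞 K₀) K A * z)
          = algebraMap (𝓞 K₀) K u * z := by
        rw [hmap A, hmap u, map_div₀]
        have hA' : algebraMap K₀ K (A : K₀) ≠ 0 := fun h0 => hA0 (hKinj (by simpa using h0))
        field_simp
      rw [heq, ← huv]
  · rintro ⟨a, ha, t, rfl⟩
    obtain ⟨α, hα⟩ := ha A (Ideal.subset_span (by simp))
    obtain ⟨β, hβ⟩ := ha B (Ideal.subset_span (by simp))
    obtain ⟨γ, hγ⟩ := ha C (Ideal.subset_span (by simp))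
    have hαK : algebraMap K₀ K a * algebraMap (𝓞 K₀) K A = algebraMap (𝓞 K₀) K α := by
      rw [hmap A, hmap α, ← map_mul, ← hα]
    have hβK : algebraMap K₀ K a * algebraMap (𝓞 K₀) K B = algebraMap (𝓞 K₀) K β := by
      rw [hmap B, hmap β, ← map_mul, ← hβ]
    have hγK : algebraMap K₀ K a * algebraMap (𝓞 K₀) K C = algebraMap (𝓞 K₀) K γ := by
      rw [hmap C, hmap γ, ← map_mul, ← hγ]
    set x := algebraMap K₀ K a * (algebraMap (𝓞 K₀) K A * z) + algebraMap (𝓞 K₀) K t with hxdef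
    have hxM : x ∈ Submodule.span (𝓞 K₀) ({z, 1} : Set K) := by
      apply Submodule.mem_span_pair.mpr
      exact ⟨α, t, by rw [Algebra.smul_def, Algebra.smul_def, mul_one, hxdef, ← mul_assoc, hαK]⟩
    have hxzM : x * z ∈ Submodule.span (𝓞 K₀) ({z, 1} : Set K) := by
      apply Submodule.mem_span_pair.mpr
      refine ⟨t - β, -γ, ?_⟩
      rw [Algebra.smul_def, Algebra.smul_def, mul_one, map_sub, map_neg]
      have hthis : x * z = algebraMap K₀ K a * (algebraMap (𝓞 K₀) K A * z ^ 2)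
          + algebraMap (𝓞 K₀) K t * z := by rw [hxdef]; ring
      have hz2 : algebraMap (𝓞 K₀) K A * z ^ 2
          = -(algebraMap (𝓞 K₀) K B * z) - algebraMap (𝓞 K₀) K C := by
        linear_combination hroot
      rw [hz2] at hthis
      rw [hthis]
      linear_combination z * hβK + hγK
    intro y hy
    obtain ⟨c, d, hcd⟩ := Submodule.mem_span_pair.mp hy
    rw [← hcd]
    rw [mul_add, mul_smul_comm, mul_smul_comm, mul_one]
    exact Submodule.add_mem _ (Submodule.smul_mem _ _ hxzM) (Submodule.smul_mem _ _ hxM)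
end

section
/- Let K₀ be a totally real number field with different ideal D_{K₀} = λ O_{K₀} generated by a purely 'imaginary-compatible' element λ, K a CM field with maximal real subfield K₀, and z ∈ K \ K₀ with ξ = ((z − z̄)λ)^{-1}. Let B₁ = (b_{1,1}, …, b_{1,g}) be a Z-basis of O_{K₀} and B₂ = (b_{2,1}, …, b_{2,g}) such that (−λ^{-1}b_{2,1}, …, −λ^{-1}b_{2,g}) is the trace-dual basis of B₁. Then the 2g elements (z b_{1,1}, …, z b_{1,g}, b_{2,1}, …, b_{2,g}) form a symplectic basis of the O_{K₀}-module b = z O_{K₀} + O_{K₀} with respect to the alternating form E_ξ(x, y) = Tr_{K/Q}(ξ x̄ y); that is, E_ξ(z b_{1,i}, z b_{1,j}) = 0, E_ξ(b_{2,i}, b_{2,j}) = 0, and E_ξ(z b_{1,i}, b_{2,j}) = δ_{ij}. -/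
open NumberField

/-- Let `K₀` be totally real of degree `g` with different `D_{K₀} = λ 𝓞 K₀`, `K/K₀` a
CM extension with conjugation `σ`, `z ∈ K \ K₀` and `ξ = ((z - z̄)λ)⁻¹`.  If `B₁` is a
`ℤ`-basis of `𝓞 K₀` and `B₂` is such that `-λ⁻¹ B₂` is the trace-dual basis of `B₁`,
then `(z B₁ | B₂)` is a symplectic basis of `b = z 𝓞 K₀ + 𝓞 K₀` for
`E_ξ(x, y) = Tr_{K/ℚ}(ξ x̄ y)`. -/
theorem symplectic_basis_of_trace_dual
    (K₀ K : Type*) [Field K₀] [NumberField K₀] [Field K] [NumberField K] [Algebra K₀ K]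
    (htr : ∀ v : InfinitePlace K₀, v.IsReal)
    (hti : ∀ v : InfinitePlace K, v.IsComplex)
    (h2 : Module.finrank K₀ K = 2)
    (σ : K ≃ₐ[K₀] K) (hσ : σ ≠ AlgEquiv.refl)
    (lam : 𝓞 K₀) (hlam : differentIdeal ℤ (𝓞 K₀) = Ideal.span {lam})
    (g : ℕ) (b₁ : Module.Basis (Fin g) ℤ (𝓞 K₀)) (b₂ : Fin g → 𝓞 K₀)
    (hdual : ∀ i j : Fin g,
      Algebra.trace ℚ K₀ (-((lam : K₀)⁻¹) * (b₂ j : K₀) * ((b₁ i : 𝓞 K₀) : K₀))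
        = if i = j then 1 else 0)
    (z : K) (hz : z ∉ (algebraMap K₀ K).range) :
    (∀ i j : Fin g,
      Algebra.trace ℚ K (((z - σ z) * algebraMap (𝓞 K₀) K lam)⁻¹ *
        σ (z * algebraMap (𝓞 K₀) K (b₁ i)) * (z * algebraMap (𝓞 K₀) K (b₁ j))) = 0) ∧
    (∀ i j : Fin g,
      Algebra.trace ℚ K (((z - σ z) * algebraMap (𝓞 K₀) K lam)⁻¹ *
        σ (algebraMap (𝓞 K₀) K (b₂ i)) * algebraMap (𝓞 K₀) K (b₂ j)) = 0) ∧
    (∀ i j : Fin g,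
      Algebra.trace ℚ K (((z - σ z) * algebraMap (𝓞 K₀) K lam)⁻¹ *
        σ (z * algebraMap (𝓞 K₀) K (b₁ i)) * algebraMap (𝓞 K₀) K (b₂ j))
        = if i = j then 1 else 0) := by
  haveI : FiniteDimensional K₀ K := FiniteDimensional.right ℚ K₀ K
  -- `(1, z)` is a `K₀`-basis of `K`
  have hz1 : LinearIndependent K₀ ![(1:K), z] := by
    rw [LinearIndependent.pair_iff]
    intro s t hst
    rw [Algebra.smul_def, mul_one, Algebra.smul_def] at hst
    by_cases ht : t = 0
    · subst ht
      simp only [map_zero, zero_mul, add_zero] at hst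
      exact ⟨(algebraMap K₀ K).injective (by simpa using hst), rfl⟩
    · exfalso
      apply hz
      have ht' : algebraMap K₀ K t ≠ 0 := by
        simpa using (map_ne_zero (algebraMap K₀ K)).mpr ht
      refine ⟨-(t⁻¹ * s), ?_⟩
      rw [map_neg, map_mul, map_inv₀]
      field_simp
      linear_combination -hst
  obtain ⟨B, hB⟩ : ∃ B : Module.Basis (Fin 2) K₀ K, ∀ i, B i = ![(1:K), z] i :=
    ⟨basisOfLinearIndependentOfCardEqFinrank hz1 (by simp [h2]),
      fun i => by rw [coe_basisOfLinearIndependentOfCardEqFinrank]⟩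
  have hrep : ∀ x : K, ∃ a b : K₀,
      x = algebraMap K₀ K a + algebraMap K₀ K b * z := by
    intro x
    refine ⟨B.repr x 0, B.repr x 1, ?_⟩
    conv_lhs => rw [← B.sum_repr x]
    rw [Fin.sum_univ_two]
    simp [hB, Algebra.smul_def]
  -- `z` satisfies a quadratic over `K₀`
  obtain ⟨p, q, hq⟩ := hrep (z * z)
  -- `σ z ≠ z`
  have hne : σ z ≠ z := by
    intro h
    apply hσ
    ext x
    obtain ⟨a, b, rfl⟩ := hrep x
    simp [map_add, map_mul, σ.commutes, h]
  -- `σ z` satisfies the same quadratic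
  have hq' : σ z * σ z = algebraMap K₀ K p + algebraMap K₀ K q * σ z := by
    have := congrArg σ hq
    simpa [map_add, map_mul, σ.commutes] using this
  -- `σ (σ z) = z`
  have hσσ : σ (σ z) = z := by
    by_contra h
    have hu : σ (σ z) * σ (σ z) =
        algebraMap K₀ K p + algebraMap K₀ K q * σ (σ z) := by
      have := congrArg σ hq'
      simpa [map_add, map_mul, σ.commutes] using this
    have hsum : σ z + z = algebraMap K₀ K q := by
      have h1 : (σ z - z) * (σ z + z) = (σ z - z) * algebraMap K₀ K q := by
        linear_combination hq' - hq
      exact mul_left_cancel₀ (sub_ne_zero.mpr hne) h1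
    have h1 : (σ (σ z) - z) * (σ (σ z) + z) =
        (σ (σ z) - z) * algebraMap K₀ K q := by
      linear_combination hu - hq
    have h2' : σ (σ z) + z = algebraMap K₀ K q :=
      mul_left_cancel₀ (sub_ne_zero.mpr h) h1
    have h3 : σ (σ z) = σ z := by linear_combination h2' - hsum
    exact hne (σ.injective h3)
  -- the key trace computation
  have key : ∀ (w : K) (c : K₀), w + σ w = algebraMap K₀ K c →
      Algebra.trace ℚ K w = Algebra.trace ℚ K₀ c := by
    intro w c h
    have hinv : Algebra.trace ℚ K (σ w) = Algebra.trace ℚ K w :=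
      Algebra.trace_eq_of_algEquiv (σ.restrictScalars ℚ) w
    have htt : Algebra.trace ℚ K (algebraMap K₀ K c)
        = Algebra.trace ℚ K₀ c + Algebra.trace ℚ K₀ c := by
      rw [← Algebra.trace_trace (S := K₀), Algebra.trace_algebraMap, h2]
      rw [two_smul, map_add]
    have h2tr : Algebra.trace ℚ K w + Algebra.trace ℚ K w
        = Algebra.trace ℚ K₀ c + Algebra.trace ℚ K₀ c :=
      calc Algebra.trace ℚ K w + Algebra.trace ℚ K w
          = Algebra.trace ℚ K w + Algebra.trace ℚ K (σ w) := by rw [hinv]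
        _ = Algebra.trace ℚ K (w + σ w) := (map_add _ _ _).symm
        _ = Algebra.trace ℚ K₀ c + Algebra.trace ℚ K₀ c := by rw [h, htt]
    linarith
  -- facts about `σ` and the ring of integers
  have hfixO : ∀ x : 𝓞 K₀, σ (algebraMap (𝓞 K₀) K x) = algebraMap (𝓞 K₀) K x := by
    intro x
    rw [IsScalarTower.algebraMap_apply (𝓞 K₀) K₀ K]
    exact σ.commutes _
  set ξ : K := ((z - σ z) * algebraMap (𝓞 K₀) K lam)⁻¹ with hξ
  have hσξ : σ ξ = -ξ := by
    rw [hξ, map_inv₀, map_mul, map_sub, hσσ, hfixO, ← inv_neg]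
    ring_nf
  have e1 : ∀ x : 𝓞 K₀, σ (z * algebraMap (𝓞 K₀) K x)
      = σ z * algebraMap (𝓞 K₀) K x := by
    intro x; rw [map_mul, hfixO]
  have e2 : ∀ x : 𝓞 K₀, σ (σ (z * algebraMap (𝓞 K₀) K x))
      = z * algebraMap (𝓞 K₀) K x := by
    intro x; rw [e1, map_mul, hσσ, hfixO]
  refine ⟨?_, ?_, ?_⟩
  · intro i j
    rw [key _ 0 ?_, map_zero]
    have hsw : σ (ξ * σ (z * algebraMap (𝓞 K₀) K (b₁ i)) * (z * algebraMap (𝓞 K₀) K (b₁ j)))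
        = -ξ * (z * algebraMap (𝓞 K₀) K (b₁ i)) * (σ z * algebraMap (𝓞 K₀) K (b₁ j)) := by
      rw [map_mul, map_mul, hσξ, e2, e1]
    rw [map_zero, hsw]
    simp only [e1]
    ring
  · intro i j
    rw [key _ 0 ?_, map_zero]
    have hsw : σ (ξ * σ (algebraMap (𝓞 K₀) K (b₂ i)) * algebraMap (𝓞 K₀) K (b₂ j))
        = -ξ * algebraMap (𝓞 K₀) K (b₂ i) * algebraMap (𝓞 K₀) K (b₂ j) := by
      rw [map_mul, map_mul, hσξ]; simp only [hfixO]
    rw [map_zero, hsw]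
    simp only [hfixO]
    ring
  · intro i j
    rw [key _ (-((lam : K₀)⁻¹) * (b₂ j : K₀) * ((b₁ i : 𝓞 K₀) : K₀)) ?_]
    · exact hdual i j
    have hΛ : ξ * (σ z - z) = -(algebraMap (𝓞 K₀) K lam)⁻¹ := by
      have hd : z - σ z ≠ 0 := sub_ne_zero.mpr (fun h => hne h.symm)
      rw [hξ, mul_inv]
      calc (z - σ z)⁻¹ * (algebraMap (𝓞 K₀) K lam)⁻¹ * (σ z - z)
          = -((z - σ z)⁻¹ * (z - σ z)) * (algebraMap (𝓞 K₀) K lam)⁻¹ := by ring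
        _ = -(algebraMap (𝓞 K₀) K lam)⁻¹ := by rw [inv_mul_cancel₀ hd]; ring
    have hsw : σ (ξ * σ (z * algebraMap (𝓞 K₀) K (b₁ i)) * algebraMap (𝓞 K₀) K (b₂ j))
        = -ξ * (z * algebraMap (𝓞 K₀) K (b₁ i)) * algebraMap (𝓞 K₀) K (b₂ j) := by
      rw [map_mul, map_mul, hσξ, e2, hfixO]
    rw [hsw]
    simp only [e1]
    have hAK : ∀ x : 𝓞 K₀, algebraMap (𝓞 K₀) K x = algebraMap K₀ K (x : K₀) :=
      fun x => (IsScalarTower.algebraMap_apply (𝓞 K₀) K₀ K x)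
    rw [map_mul, map_mul, map_neg, map_inv₀, ← hAK, ← hAK, ← hAK]
    linear_combination (algebraMap (𝓞 K₀) K (b₁ i) * algebraMap (𝓞 K₀) K (b₂ j)) * hΛ
end

section
/- Let K₀ be a totally real number field, K/K₀ a CM extension with conjugation z ↦ z̄ and D_{K₀} = λ O_{K₀}. Let z₁, z₂ ∈ K \ K₀ be roots of quadratic polynomials A_i X² + B_i X + C_i ∈ O_{K₀}[X] (i = 1, 2) such that b_i = z_i O_{K₀} + O_{K₀} have the same multiplier ring O. Set δ_i = 2 A_i z_i + B_i and ε = δ₁/δ₂. Then ε ∈ K₀ and ε O_{K₀} = d₁ d₂^{-1}, where d_i = gcd(A_i, B_i, C_i). In particular, if the two polynomials have equal discriminants B₁² − 4A₁C₁ = B₂² − 4A₂C₂ and ε is totally positive, then δ₁ = δ₂ and d₁ = d₂. -/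
open NumberField

lemma aux_lin {K₀ K : Type*} [Field K₀] [Field K] [Algebra K₀ K] {z : K}
    (hz : z ∉ (algebraMap K₀ K).range) {p q : K₀}
    (h : algebraMap K₀ K p * z + algebraMap K₀ K q = 0) : p = 0 ∧ q = 0 := by
  have hinj : Function.Injective (algebraMap K₀ K) := (algebraMap K₀ K).injective
  by_cases hp : p = 0
  · subst hp
    simp only [map_zero, zero_mul, zero_add] at h
    exact ⟨rfl, hinj (by simpa using h)⟩
  · exfalso
    apply hz
    refine ⟨-q / p, ?_⟩
    have hp' : algebraMap K₀ K p ≠ 0 := fun h0 => hp (hinj (by simpa using h0))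
    rw [map_div₀, map_neg]
    field_simp
    linear_combination -h

lemma aux_span {K₀ K : Type*} [Field K₀] [Field K] [Algebra K₀ K] {z : K}
    (hz : z ∉ (algebraMap K₀ K).range) (h2 : Module.finrank K₀ K = 2) :
    Submodule.span K₀ ({1, z} : Set K) = ⊤ := by
  have : FiniteDimensional K₀ K := .of_finrank_eq_succ h2
  have hli : LinearIndependent K₀ ![(1 : K), z] := by
    rw [LinearIndependent.pair_iff]
    intro s t hst
    by_contra hc
    rcases aux_lin hz (p := t) (q := s) (by rw [Algebra.smul_def, Algebra.smul_def, mul_one] at hst; linear_combination hst) with ⟨ht, hs⟩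
    exact hc ⟨hs, ht⟩
  apply Submodule.eq_top_of_finrank_eq
  rw [h2]
  have := finrank_span_eq_card hli
  rw [show ({1, z} : Set K) = Set.range ![(1:K), z] by simp [Matrix.range_cons, Matrix.range_empty, Set.pair_comm]]
  exact this

lemma aux_char {K₀ K : Type*} [Field K₀] [NumberField K₀] [Field K] [Algebra K₀ K]
    (σ : K ≃ₐ[K₀] K) {z : K} (hz : z ∉ (algebraMap K₀ K).range) {A B C : 𝓞 K₀} (hA : A ≠ 0)
    (hroot : algebraMap (𝓞 K₀) K A * z ^ 2 + algebraMap (𝓞 K₀) K B * z +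
      algebraMap (𝓞 K₀) K C = 0)
    (hsum : algebraMap (𝓞 K₀) K A * (z + σ z) + algebraMap (𝓞 K₀) K B = 0) :
    (fun r => r - σ r) '' {x : K | ∀ y ∈ Submodule.span (𝓞 K₀) ({z, 1} : Set K),
        x * y ∈ Submodule.span (𝓞 K₀) ({z, 1} : Set K)}
    = {x : K | ∃ u : K₀,
        (∃ a : 𝓞 K₀, algebraMap (𝓞 K₀) K₀ a = u * algebraMap (𝓞 K₀) K₀ A) ∧
        (∃ b : 𝓞 K₀, algebraMap (𝓞 K₀) K₀ b = u * algebraMap (𝓞 K₀) K₀ B) ∧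
        (∃ c : 𝓞 K₀, algebraMap (𝓞 K₀) K₀ c = u * algebraMap (𝓞 K₀) K₀ C) ∧
        x = algebraMap K₀ K u * (2 * algebraMap (𝓞 K₀) K A * z + algebraMap (𝓞 K₀) K B)} := by
  have hfg : ∀ x : 𝓞 K₀,
      algebraMap (𝓞 K₀) K x = algebraMap K₀ K (algebraMap (𝓞 K₀) K₀ x) := fun x =>
    IsScalarTower.algebraMap_apply _ _ _ x
  simp only [hfg]
  set g := algebraMap K₀ K with hg
  set c := algebraMap (𝓞 K₀) K₀ with hc
  have hcinj : Function.Injective c := NumberField.RingOfIntegers.coe_injective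
  have hginj : Function.Injective g := g.injective
  have hcA : c A ≠ 0 := fun h => hA (hcinj (by simpa using h))
  have hgcA : g (c A) ≠ 0 := fun h => hcA (hginj (by simpa using h))
  have hsmul : ∀ (a : 𝓞 K₀) (x : K), a • x = g (c a) * x := fun a x => by
    rw [Algebra.smul_def, ← hfg]
  have hδA : g (c A) * (z - σ z) = 2 * g (c A) * z + g (c B) := by
    rw [hfg, hfg] at hsum; linear_combination -hsum
  have F3 : g (c A) * z ^ 2 + g (c B) * z + g (c C) = 0 := by
    rw [hfg, hfg, hfg] at hroot; exact hroot
  have hzM : z ∈ Submodule.span (𝓞 K₀) ({z, 1} : Set K) :=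
    Submodule.subset_span (by simp)
  have h1M : (1 : K) ∈ Submodule.span (𝓞 K₀) ({z, 1} : Set K) :=
    Submodule.subset_span (by simp)
  have hpair : ∀ x : K, x ∈ Submodule.span (𝓞 K₀) ({z, 1} : Set K) ↔
      ∃ a b : 𝓞 K₀, g (c a) * z + g (c b) = x := by
    intro x
    rw [Submodule.mem_span_pair]
    constructor
    · rintro ⟨a, b, rfl⟩; exact ⟨a, b, by rw [hsmul, hsmul, mul_one]⟩
    · rintro ⟨a, b, rfl⟩; exact ⟨a, b, by rw [hsmul, hsmul, mul_one]⟩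
  ext x
  constructor
  · rintro ⟨r, hr, rfl⟩
    have hrM : r ∈ Submodule.span (𝓞 K₀) ({z, 1} : Set K) := by
      have := hr 1 h1M; simpa using this
    obtain ⟨a, b, hab⟩ := (hpair r).mp hrM
    obtain ⟨a', b', hab'⟩ := (hpair (r * z)).mp (hr z hzM)
    have key : g (c A * c a' - c b * c A + c a * c B) * z + g (c A * c b' + c a * c C) = 0 := by
      simp only [map_sub, map_mul, map_add]
      linear_combination g (c A) * hab' - g (c A) * z * hab + g (c a) * F3
    obtain ⟨hp, hq⟩ := aux_lin hz key
    have hσr : σ r = g (c a) * σ z + g (c b) := by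
      rw [← hab, map_add, map_mul, AlgEquiv.commutes, AlgEquiv.commutes]
    refine ⟨c a / c A, ⟨a, (div_mul_cancel₀ (c a) hcA).symm⟩, ⟨b - a', ?_⟩, ⟨-b', ?_⟩, ?_⟩
    · rw [map_sub, div_mul_eq_mul_div, eq_comm, div_eq_iff hcA]; linear_combination hp
    · rw [map_neg, div_mul_eq_mul_div, eq_comm, div_eq_iff hcA]; linear_combination hq
    · show r - σ r = g (c a / c A) * (2 * g (c A) * z + g (c B))
      rw [map_div₀, div_mul_eq_mul_div, eq_div_iff hgcA, hσr, ← hab]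
      linear_combination g (c a) * hδA
  · rintro ⟨u, ⟨a, ha⟩, ⟨b, hb⟩, ⟨cc, hcc⟩, rfl⟩
    have ha' : g (c a) = g u * g (c A) := by rw [ha, map_mul]
    have hb' : g (c b) = g u * g (c B) := by rw [hb, map_mul]
    have hcc' : g (c cc) = g u * g (c C) := by rw [hcc, map_mul]
    refine ⟨g (c a) * z, ?_, ?_⟩
    · -- membership in the multiplier set
      have hr1 : g (c a) * z * 1 ∈ Submodule.span (𝓞 K₀) ({z, 1} : Set K) := by
        rw [mul_one]; exact (hpair _).mpr ⟨a, 0, by simp⟩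
      have hrz : g (c a) * z * z ∈ Submodule.span (𝓞 K₀) ({z, 1} : Set K) := by
        refine (hpair _).mpr ⟨-b, -cc, ?_⟩
        rw [map_neg, map_neg, map_neg, map_neg]
        linear_combination -(z ^ 2 * ha') - z * hb' - hcc' - g u * F3
      intro y hy
      obtain ⟨p, q, hpq⟩ := Submodule.mem_span_pair.mp hy
      rw [← hpq, mul_add, mul_smul_comm, mul_smul_comm]
      refine Submodule.add_mem _ (Submodule.smul_mem _ _ ?_) (Submodule.smul_mem _ _ ?_)
      · exact hrz
      · rw [mul_one] at hr1 ⊢; exact hr1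
    · -- the value of r - σ r
      simp only
      rw [map_mul, AlgEquiv.commutes]
      rw [ha', mul_assoc, mul_assoc, ← mul_sub]
      congr 1
      linear_combination hδA

lemma aux_sigma {K₀ K : Type*} [Field K₀] [Field K] [Algebra K₀ K] {σ : K ≃ₐ[K₀] K} {z : K}
    (hz : z ∉ (algebraMap K₀ K).range) (h2 : Module.finrank K₀ K = 2) (hσz : σ z = z) :
    σ = AlgEquiv.refl := by
  refine AlgEquiv.ext fun x => ?_
  have hx : x ∈ Submodule.span K₀ ({1, z} : Set K) := by rw [aux_span hz h2]; trivial
  obtain ⟨p, q, hpq⟩ := Submodule.mem_span_pair.mp hx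
  rw [← hpq]
  simp [map_add, map_smul, hσz]

lemma aux_mem_inv {K₀ : Type*} [Field K₀] [NumberField K₀] (A B C : 𝓞 K₀) (hA : A ≠ 0) (u : K₀) :
    u ∈ (1 : FractionalIdeal (nonZeroDivisors (𝓞 K₀)) K₀) /
        (Ideal.span ({A, B, C} : Set (𝓞 K₀)) : FractionalIdeal (nonZeroDivisors (𝓞 K₀)) K₀) ↔
      ((∃ a : 𝓞 K₀, algebraMap (𝓞 K₀) K₀ a = u * algebraMap (𝓞 K₀) K₀ A) ∧
       (∃ b : 𝓞 K₀, algebraMap (𝓞 K₀) K₀ b = u * algebraMap (𝓞 K₀) K₀ B) ∧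
       (∃ c : 𝓞 K₀, algebraMap (𝓞 K₀) K₀ c = u * algebraMap (𝓞 K₀) K₀ C)) := by
  set c := algebraMap (𝓞 K₀) K₀ with hcdef
  have hJ0 : (Ideal.span ({A, B, C} : Set (𝓞 K₀)) :
      FractionalIdeal (nonZeroDivisors (𝓞 K₀)) K₀) ≠ 0 := by
    rw [ne_eq, FractionalIdeal.coeIdeal_eq_zero]
    intro h
    exact hA ((Ideal.span_eq_bot.mp h) A (by simp))
  rw [FractionalIdeal.mem_div_iff_of_ne_zero hJ0]
  constructor
  · intro h
    refine ⟨?_, ?_, ?_⟩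
    · obtain ⟨a, ha⟩ := (FractionalIdeal.mem_one_iff _).mp
        (h (c A) ((FractionalIdeal.mem_coeIdeal _).mpr ⟨A, Ideal.subset_span (by simp), rfl⟩))
      exact ⟨a, by rw [ha, mul_comm]⟩
    · obtain ⟨b, hb⟩ := (FractionalIdeal.mem_one_iff _).mp
        (h (c B) ((FractionalIdeal.mem_coeIdeal _).mpr ⟨B, Ideal.subset_span (by simp), rfl⟩))
      exact ⟨b, by rw [hb, mul_comm]⟩
    · obtain ⟨cc, hc⟩ := (FractionalIdeal.mem_one_iff _).mp
        (h (c C) ((FractionalIdeal.mem_coeIdeal _).mpr ⟨C, Ideal.subset_span (by simp), rfl⟩))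
      exact ⟨cc, by rw [hc, mul_comm]⟩
  · rintro ⟨⟨a, ha⟩, ⟨b, hb⟩, ⟨cc, hc⟩⟩ y hy
    obtain ⟨m, hm, rfl⟩ := (FractionalIdeal.mem_coeIdeal _).mp hy
    clear hy
    have : ∃ t : 𝓞 K₀, c t = u * c m := by
      induction hm using Submodule.span_induction with
      | mem x hx =>
        rcases hx with rfl | rfl | rfl
        · exact ⟨a, by rw [ha, mul_comm]⟩
        · exact ⟨b, by rw [hb, mul_comm]⟩
        · exact ⟨cc, by rw [hc, mul_comm]⟩
      | zero => exact ⟨0, by simp⟩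
      | add x y _ _ hx hy =>
        obtain ⟨t₁, ht₁⟩ := hx; obtain ⟨t₂, ht₂⟩ := hy
        exact ⟨t₁ + t₂, by rw [map_add, ht₁, ht₂, map_add, mul_add]⟩
      | smul s x _ hx =>
        obtain ⟨t, ht⟩ := hx
        exact ⟨s * t, by rw [map_mul, ht, smul_eq_mul, map_mul]; ring⟩
    obtain ⟨t, ht⟩ := this
    exact (FractionalIdeal.mem_one_iff _).mpr ⟨t, ht⟩

/-- Let `z₁, z₂ ∈ K \ K₀` be roots of quadratics `A_i X² + B_i X + C_i ∈ 𝓞 K₀[X]`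
whose modules `z_i 𝓞 K₀ + 𝓞 K₀` have the same multiplier ring.  With
`δ_i = 2 A_i z_i + B_i` and `ε = δ₁/δ₂` one has `ε ∈ K₀` and `ε 𝓞 K₀ = d₁ d₂⁻¹`
where `d_i = (A_i, B_i, C_i)`; if moreover the discriminants are equal and `ε` is
totally positive, then `δ₁ = δ₂` and `d₁ = d₂`. -/
theorem sqrt_disc_quotient (K₀ K : Type*) [Field K₀] [NumberField K₀]
    [Field K] [NumberField K] [Algebra K₀ K]
    (htr : ∀ v : InfinitePlace K₀, v.IsReal)
    (hti : ∀ v : InfinitePlace K, v.IsComplex)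
    (h2 : Module.finrank K₀ K = 2)
    (σ : K ≃ₐ[K₀] K) (hσ : σ ≠ AlgEquiv.refl)
    (z₁ z₂ : K) (hz₁ : z₁ ∉ (algebraMap K₀ K).range) (hz₂ : z₂ ∉ (algebraMap K₀ K).range)
    (A₁ B₁ C₁ A₂ B₂ C₂ : 𝓞 K₀) (hA₁ : A₁ ≠ 0) (hA₂ : A₂ ≠ 0)
    (hroot₁ : algebraMap (𝓞 K₀) K A₁ * z₁ ^ 2 + algebraMap (𝓞 K₀) K B₁ * z₁ +
      algebraMap (𝓞 K₀) K C₁ = 0)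
    (hroot₂ : algebraMap (𝓞 K₀) K A₂ * z₂ ^ 2 + algebraMap (𝓞 K₀) K B₂ * z₂ +
      algebraMap (𝓞 K₀) K C₂ = 0)
    (hmult : {x : K | ∀ y ∈ Submodule.span (𝓞 K₀) ({z₁, 1} : Set K),
        x * y ∈ Submodule.span (𝓞 K₀) ({z₁, 1} : Set K)}
      = {x : K | ∀ y ∈ Submodule.span (𝓞 K₀) ({z₂, 1} : Set K),
        x * y ∈ Submodule.span (𝓞 K₀) ({z₂, 1} : Set K)}) :
    ∃ e : K₀,
      algebraMap K₀ K e * (2 * algebraMap (𝓞 K₀) K A₂ * z₂ + algebraMap (𝓞 K₀) K B₂)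
        = 2 * algebraMap (𝓞 K₀) K A₁ * z₁ + algebraMap (𝓞 K₀) K B₁ ∧
      FractionalIdeal.spanSingleton (nonZeroDivisors (𝓞 K₀)) e
        = (Ideal.span ({A₁, B₁, C₁} : Set (𝓞 K₀)) :
            FractionalIdeal (nonZeroDivisors (𝓞 K₀)) K₀) /
          (Ideal.span ({A₂, B₂, C₂} : Set (𝓞 K₀)) :
            FractionalIdeal (nonZeroDivisors (𝓞 K₀)) K₀) ∧
      ((B₁ ^ 2 - 4 * A₁ * C₁ = B₂ ^ 2 - 4 * A₂ * C₂ ∧ ∀ φ : K₀ →+* ℝ, 0 < φ e) →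
        (2 * algebraMap (𝓞 K₀) K A₁ * z₁ + algebraMap (𝓞 K₀) K B₁
            = 2 * algebraMap (𝓞 K₀) K A₂ * z₂ + algebraMap (𝓞 K₀) K B₂ ∧
          Ideal.span ({A₁, B₁, C₁} : Set (𝓞 K₀))
            = Ideal.span ({A₂, B₂, C₂} : Set (𝓞 K₀)))) := by

  have hfg : ∀ x : 𝓞 K₀,
      algebraMap (𝓞 K₀) K x = algebraMap K₀ K (algebraMap (𝓞 K₀) K₀ x) := fun x =>
    IsScalarTower.algebraMap_apply _ _ _ x
  set g := algebraMap K₀ K with hgdef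
  set c := algebraMap (𝓞 K₀) K₀ with hcdef
  have hcinj : Function.Injective c := NumberField.RingOfIntegers.coe_injective
  have hginj : Function.Injective g := g.injective
  have hσz₁ : σ z₁ ≠ z₁ := fun h => hσ (aux_sigma hz₁ h2 h)
  have hσz₂ : σ z₂ ≠ z₂ := fun h => hσ (aux_sigma hz₂ h2 h)
  -- conjugate roots
  have hσf : ∀ x : 𝓞 K₀, σ (algebraMap (𝓞 K₀) K x) = algebraMap (𝓞 K₀) K x := fun x => by
    rw [hfg]; exact σ.commutes _
  have hsum₁ : algebraMap (𝓞 K₀) K A₁ * (z₁ + σ z₁) + algebraMap (𝓞 K₀) K B₁ = 0 := by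
    have hσr : algebraMap (𝓞 K₀) K A₁ * (σ z₁) ^ 2 + algebraMap (𝓞 K₀) K B₁ * σ z₁ +
        algebraMap (𝓞 K₀) K C₁ = 0 := by
      have := congrArg σ hroot₁
      simpa [map_add, map_mul, map_pow, hσf] using this
    have hfac : (z₁ - σ z₁) * (algebraMap (𝓞 K₀) K A₁ * (z₁ + σ z₁) +
        algebraMap (𝓞 K₀) K B₁) = 0 := by linear_combination hroot₁ - hσr
    rcases mul_eq_zero.mp hfac with h | h
    · exact absurd (by linear_combination -h) hσz₁
    · exact h
  have hsum₂ : algebraMap (𝓞 K₀) K A₂ * (z₂ + σ z₂) + algebraMap (𝓞 K₀) K B₂ = 0 := by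
    have hσr : algebraMap (𝓞 K₀) K A₂ * (σ z₂) ^ 2 + algebraMap (𝓞 K₀) K B₂ * σ z₂ +
        algebraMap (𝓞 K₀) K C₂ = 0 := by
      have := congrArg σ hroot₂
      simpa [map_add, map_mul, map_pow, hσf] using this
    have hfac : (z₂ - σ z₂) * (algebraMap (𝓞 K₀) K A₂ * (z₂ + σ z₂) +
        algebraMap (𝓞 K₀) K B₂) = 0 := by linear_combination hroot₂ - hσr
    rcases mul_eq_zero.mp hfac with h | h
    · exact absurd (by linear_combination -h) hσz₂
    · exact h
  set δ₁ : K := 2 * algebraMap (𝓞 K₀) K A₁ * z₁ + algebraMap (𝓞 K₀) K B₁ with hδ₁def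
  set δ₂ : K := 2 * algebraMap (𝓞 K₀) K A₂ * z₂ + algebraMap (𝓞 K₀) K B₂ with hδ₂def
  have hδnz : ∀ (z : K) (A B : 𝓞 K₀), A ≠ 0 → z ∉ g.range →
      2 * algebraMap (𝓞 K₀) K A * z + algebraMap (𝓞 K₀) K B ≠ 0 := by
    intro z A B hA hz h
    apply hz
    have h2A : (2 : K₀) * c A ≠ 0 := by
      have : c A ≠ 0 := fun h0 => hA (hcinj (by simpa using h0))
      exact mul_ne_zero two_ne_zero this
    refine ⟨-(c B) / (2 * c A), ?_⟩
    rw [map_div₀, map_neg, map_mul]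
    have hne : g ((2 : K₀)) * g (c A) ≠ 0 := by
      rw [← map_mul]; exact fun h0 => h2A (hginj (by simpa using h0))
    rw [div_eq_iff hne, map_ofNat]
    rw [hfg, hfg] at h
    linear_combination -h
  have hδ₁0 : δ₁ ≠ 0 := hδnz z₁ A₁ B₁ hA₁ hz₁
  have hδ₂0 : δ₂ ≠ 0 := hδnz z₂ A₂ B₂ hA₂ hz₂
  have hσδ₁ : σ δ₁ = -δ₁ := by
    have h : σ δ₁ = 2 * algebraMap (𝓞 K₀) K A₁ * σ z₁ + algebraMap (𝓞 K₀) K B₁ := by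
      rw [hδ₁def, map_add, map_mul, map_mul, hσf, hσf, map_ofNat]
    rw [h, hδ₁def]; linear_combination 2 * hsum₁
  have hσδ₂ : σ δ₂ = -δ₂ := by
    have h : σ δ₂ = 2 * algebraMap (𝓞 K₀) K A₂ * σ z₂ + algebraMap (𝓞 K₀) K B₂ := by
      rw [hδ₂def, map_add, map_mul, map_mul, hσf, hσf, map_ofNat]
    rw [h, hδ₂def]; linear_combination 2 * hsum₂
  -- the element e
  have hfix : σ (δ₁ / δ₂) = δ₁ / δ₂ := by rw [map_div₀, hσδ₁, hσδ₂, neg_div_neg_eq]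
  have hefix : ∃ e : K₀, g e = δ₁ / δ₂ := by
    have hsp : δ₁ / δ₂ ∈ Submodule.span K₀ ({1, z₁} : Set K) := by
      rw [aux_span hz₁ h2]; trivial
    obtain ⟨p, q, hpq⟩ := Submodule.mem_span_pair.mp hsp
    rw [Algebra.smul_def, Algebra.smul_def, mul_one] at hpq
    by_cases hq : q = 0
    · exact ⟨p, by rw [← hpq, hq, map_zero, zero_mul, add_zero]⟩
    · exfalso
      have h1 : σ (δ₁ / δ₂) = g p + g q * σ z₁ := by
        rw [← hpq, map_add, map_mul, σ.commutes, σ.commutes]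
      rw [hfix, ← hpq] at h1
      have : g q * (σ z₁ - z₁) = 0 := by linear_combination -h1
      rcases mul_eq_zero.mp this with h | h
      · exact hq (hginj (by simpa using h))
      · exact hσz₁ (by linear_combination h)
  obtain ⟨e, he⟩ := hefix
  have he1 : g e * δ₂ = δ₁ := by rw [he, div_mul_cancel₀ _ hδ₂0]
  have he0 : e ≠ 0 := by
    intro h
    rw [h, map_zero, zero_mul] at he1
    exact hδ₁0 he1.symm
  -- compare imaginary parts of the multiplier rings
  have hS := congrArg (Set.image (fun r => r - σ r)) hmult
  rw [aux_char σ hz₁ hA₁ hroot₁ hsum₁, aux_char σ hz₂ hA₂ hroot₂ hsum₂] at hS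
  rw [← hδ₁def, ← hδ₂def, Set.ext_iff] at hS
  have himp₁ : ∀ u : K₀,
      ((∃ a, c a = u * c A₁) ∧ (∃ b, c b = u * c B₁) ∧ (∃ cc, c cc = u * c C₁)) →
      ((∃ a, c a = u * e * c A₂) ∧ (∃ b, c b = u * e * c B₂) ∧
        (∃ cc, c cc = u * e * c C₂)) := by
    intro u hu
    obtain ⟨u', h1, h2', h3, hx⟩ := (hS (g u * δ₁)).mp ⟨u, hu.1, hu.2.1, hu.2.2, rfl⟩
    have hue : u * e = u' := by
      apply hginj
      apply mul_right_cancel₀ hδ₂0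
      rw [map_mul, mul_assoc, he1]
      exact hx
    rw [hue]; exact ⟨h1, h2', h3⟩
  have himp₂ : ∀ u : K₀,
      ((∃ a, c a = u * c A₂) ∧ (∃ b, c b = u * c B₂) ∧ (∃ cc, c cc = u * c C₂)) →
      ((∃ a, c a = u * e⁻¹ * c A₁) ∧ (∃ b, c b = u * e⁻¹ * c B₁) ∧
        (∃ cc, c cc = u * e⁻¹ * c C₁)) := by
    intro u hu
    obtain ⟨u', h1, h2', h3, hx⟩ := (hS (g u * δ₂)).mpr ⟨u, hu.1, hu.2.1, hu.2.2, rfl⟩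
    have hue : u * e⁻¹ = u' := by
      have h' : g u * δ₂ = g (u' * e) * δ₂ := by
        rw [hx, map_mul, mul_assoc, he1]
      have : u = u' * e := hginj (mul_right_cancel₀ hδ₂0 h')
      rw [this, mul_assoc, mul_inv_cancel₀ he0, mul_one]
    rw [hue]; exact ⟨h1, h2', h3⟩
  -- the fractional ideal identity
  set D₁ : FractionalIdeal (nonZeroDivisors (𝓞 K₀)) K₀ :=
    (Ideal.span ({A₁, B₁, C₁} : Set (𝓞 K₀)) : FractionalIdeal (nonZeroDivisors (𝓞 K₀)) K₀)
    with hD₁def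
  set D₂ : FractionalIdeal (nonZeroDivisors (𝓞 K₀)) K₀ :=
    (Ideal.span ({A₂, B₂, C₂} : Set (𝓞 K₀)) : FractionalIdeal (nonZeroDivisors (𝓞 K₀)) K₀)
    with hD₂def
  have hD₁0 : D₁ ≠ 0 := by
    rw [hD₁def, ne_eq, FractionalIdeal.coeIdeal_eq_zero]
    intro h
    exact hA₁ ((Ideal.span_eq_bot.mp h) A₁ (by simp))
  have hD₂0 : D₂ ≠ 0 := by
    rw [hD₂def, ne_eq, FractionalIdeal.coeIdeal_eq_zero]
    intro h
    exact hA₂ ((Ideal.span_eq_bot.mp h) A₂ (by simp))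
  have hkey : FractionalIdeal.spanSingleton (nonZeroDivisors (𝓞 K₀)) e * (1 / D₁) = 1 / D₂ := by
    ext x
    rw [FractionalIdeal.mem_singleton_mul]
    constructor
    · rintro ⟨y, hy, rfl⟩
      rw [hD₁def] at hy
      rw [hD₂def]
      rw [aux_mem_inv A₁ B₁ C₁ hA₁] at hy
      rw [aux_mem_inv A₂ B₂ C₂ hA₂]
      have := himp₁ y hy
      rwa [show y * e = e * y by ring] at this
    · intro hx
      rw [hD₂def] at hx
      rw [aux_mem_inv A₂ B₂ C₂ hA₂] at hx
      refine ⟨x * e⁻¹, ?_, by field_simp⟩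
      rw [hD₁def, aux_mem_inv A₁ B₁ C₁ hA₁]
      exact himp₂ x hx
  have h1d₁ : (1 : FractionalIdeal (nonZeroDivisors (𝓞 K₀)) K₀) / D₁ = D₁⁻¹ := one_div _
  have h1d₂ : (1 : FractionalIdeal (nonZeroDivisors (𝓞 K₀)) K₀) / D₂ = D₂⁻¹ := one_div _
  rw [h1d₁, h1d₂] at hkey
  have hfrac : FractionalIdeal.spanSingleton (nonZeroDivisors (𝓞 K₀)) e = D₁ / D₂ := by
    have hs : FractionalIdeal.spanSingleton (nonZeroDivisors (𝓞 K₀)) e * D₁⁻¹ * D₁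
        = D₂⁻¹ * D₁ := by rw [hkey]
    rw [mul_assoc, inv_mul_cancel₀ hD₁0, mul_one] at hs
    rw [hs, div_eq_mul_inv, mul_comm]
  refine ⟨e, he1, hfrac, ?_⟩
  rintro ⟨hdisc, hpos⟩
  -- discriminants
  have hd1 : δ₁ ^ 2 = algebraMap (𝓞 K₀) K (B₁ ^ 2 - 4 * A₁ * C₁) := by
    rw [hδ₁def]
    simp only [map_sub, map_mul, map_pow, map_ofNat]
    linear_combination (4 * algebraMap (𝓞 K₀) K A₁) * hroot₁
  have hd2 : δ₂ ^ 2 = algebraMap (𝓞 K₀) K (B₂ ^ 2 - 4 * A₂ * C₂) := by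
    rw [hδ₂def]
    simp only [map_sub, map_mul, map_pow, map_ofNat]
    linear_combination (4 * algebraMap (𝓞 K₀) K A₂) * hroot₂
  have hδδ : δ₁ ^ 2 = δ₂ ^ 2 := by rw [hd1, hd2, hdisc]
  have hge : g (e ^ 2) = g 1 := by
    rw [map_pow, map_one]
    apply mul_right_cancel₀ (pow_ne_zero 2 hδ₂0)
    rw [one_mul, ← mul_pow, he1, hδδ]
  have he2 : e ^ 2 = 1 := hginj hge
  have hfac : (e - 1) * (e + 1) = 0 := by linear_combination he2
  rcases mul_eq_zero.mp hfac with h | h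
  · have he' : e = 1 := by linear_combination h
    constructor
    · rw [he', map_one, one_mul] at he1
      exact he1.symm
    · rw [he', FractionalIdeal.spanSingleton_one] at hfrac
      have hDD : D₁ = D₂ := (div_eq_one_iff_eq hD₂0).mp hfrac.symm
      rw [hD₁def, hD₂def] at hDD
      exact FractionalIdeal.coeIdeal_inj.mp hDD
  · exfalso
    have he' : e = -1 := by linear_combination h
    obtain ⟨v⟩ : Nonempty (InfinitePlace K₀) := inferInstance
    have hφ := hpos (NumberField.InfinitePlace.embedding_of_isReal (htr v))
    rw [he'] at hφ
    simp at hφ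
    linarith
end

section
/- Let O be an order in a number field K containing O_{K₀} (K/K₀ quadratic), with conductor f, and let p be a prime ideal of O_{K₀} not dividing f. Let z ∈ K be a root of A X² + B X + C ∈ O_{K₀}[X] with p not dividing gcd(A,B,C), such that z O_{K₀} + O_{K₀} has multiplier ring O. Set U(X) = X² + BX + AC with root θ = Az. If p is ramified in O_K (i.e., p O_K = P² for a prime P of O_K), then the remainder of U upon division by a monic linear lift U₁ of the repeated factor of U mod p is an element of O_{K₀} not divisible by p²; in particular U has no root in O_{K₀}/p². -/
open NumberField

/-- Relative Kummer–Dedekind lemma, ramified case.  Let `O` be the multiplier ring of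
`b = z 𝓞 K₀ + 𝓞 K₀` (an order of `K` containing `𝓞 K₀`), `p` a prime of `𝓞 K₀`
coprime to the conductor of `O` and not dividing `(A, B, C)`, where `z` is a root of
`A X² + B X + C`.  Put `U(X) = X² + B X + A C`.  If `p` is ramified in `𝓞 K` and
`U ≡ (X - u)² (mod p)`, then the remainder `U(u) = u² + B u + A C` of `U` upon
division by `X - u` is not divisible by `p²`; in particular `U` has no root
modulo `p²`. -/
theorem kummer_dedekind_ramified_remainder
    (K₀ K : Type*) [Field K₀] [NumberField K₀] [Field K] [NumberField K] [Algebra K₀ K]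
    (htr : ∀ v : InfinitePlace K₀, v.IsReal)
    (hti : ∀ v : InfinitePlace K, v.IsComplex)
    (h2 : Module.finrank K₀ K = 2)
    (z : K) (hz : z ∉ (algebraMap K₀ K).range)
    (A B C : 𝓞 K₀) (hA : A ≠ 0)
    (hroot : algebraMap (𝓞 K₀) K A * z ^ 2 + algebraMap (𝓞 K₀) K B * z +
      algebraMap (𝓞 K₀) K C = 0)
    (p : Ideal (𝓞 K₀)) (hp : p.IsPrime) (hp0 : p ≠ ⊥)
    (hgcd : ¬ Ideal.span ({A, B, C} : Set (𝓞 K₀)) ≤ p)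
    -- `p` is coprime to the conductor of the multiplier ring `O` of `b`:
    (hcop : ∃ x : 𝓞 K₀, x ∉ p ∧ ∀ y : 𝓞 K,
      ∀ w ∈ Submodule.span (𝓞 K₀) ({z, 1} : Set K),
        (algebraMap (𝓞 K₀) K x * algebraMap (𝓞 K) K y) * w ∈
          Submodule.span (𝓞 K₀) ({z, 1} : Set K))
    -- `p` is ramified in `𝓞 K`:
    (hram : ∃ P : Ideal (𝓞 K), P.IsPrime ∧
      Ideal.map (algebraMap (𝓞 K₀) (𝓞 K)) p = P ^ 2)
    (u : 𝓞 K₀) (hu₁ : B + 2 * u ∈ p) (hu₂ : A * C - u ^ 2 ∈ p) :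
    u ^ 2 + B * u + A * C ∉ p ^ 2 ∧
      ∀ x : 𝓞 K₀, x ^ 2 + B * x + A * C ∉ p ^ 2 := by
  classical
  obtain ⟨x, hxp, hxmul⟩ := hcop
  obtain ⟨P, hP, hPsq⟩ := hram
  set φ : 𝓞 K₀ →+* K := algebraMap (𝓞 K₀) K with hφdef
  set ψ : 𝓞 K →+* K := algebraMap (𝓞 K) K with hψdef
  set f : 𝓞 K₀ →+* 𝓞 K := algebraMap (𝓞 K₀) (𝓞 K) with hfdef
  have hψf : ∀ a : 𝓞 K₀, ψ (f a) = φ a := fun a =>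
    (IsScalarTower.algebraMap_apply (𝓞 K₀) (𝓞 K) K a).symm
  have hψinj : Function.Injective ψ := RingOfIntegers.coe_injective
  have hcoeinj : Function.Injective (algebraMap (𝓞 K₀) K₀) := RingOfIntegers.coe_injective
  have hφeq : ∀ a : 𝓞 K₀, φ a = algebraMap K₀ K (algebraMap (𝓞 K₀) K₀ a) := fun a =>
    IsScalarTower.algebraMap_apply (𝓞 K₀) K₀ K a
  have hφinj : Function.Injective φ := by
    intro a b h
    rw [hφeq, hφeq] at h
    exact hcoeinj ((algebraMap K₀ K).injective h)
  have hfinj : Function.Injective f := by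
    intro a b h
    apply hφinj
    rw [← hψf, ← hψf, h]
  -- θ = A z is integral
  have hkeyK : (φ A * z) ^ 2 + φ B * (φ A * z) + φ (A * C) = 0 := by
    rw [map_mul]
    linear_combination φ A * hroot
  have hθint : IsIntegral ℤ (φ A * z) := by
    have h1 : IsIntegral (𝓞 K₀) (φ A * z) := by
      refine ⟨Polynomial.X ^ 2 + (Polynomial.C B * Polynomial.X + Polynomial.C (A * C)), ?_, ?_⟩
      · monicity!
      · simp only [Polynomial.eval₂_add, Polynomial.eval₂_pow, Polynomial.eval₂_X,
          Polynomial.eval₂_mul, Polynomial.eval₂_C]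
        rw [← add_assoc]
        exact hkeyK
    exact isIntegral_trans _ h1
  set θ : 𝓞 K := ⟨φ A * z, hθint⟩ with hθdef
  have hψθ : ψ θ = φ A * z := rfl
  have hθeq : θ ^ 2 + f B * θ + f (A * C) = 0 := by
    apply hψinj
    simp only [map_add, map_pow, map_mul, map_zero, hψf, hψθ]
    rw [← map_mul]
    exact hkeyK
  set bsp : Submodule (𝓞 K₀) K := Submodule.span (𝓞 K₀) ({z, 1} : Set K) with hbspdef
  have hzb : z ∈ bsp := Submodule.subset_span (by simp)
  have h1b : (1 : K) ∈ bsp := Submodule.subset_span (by simp)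
  -- uniqueness of coefficients
  have huniq : ∀ α β γ δ : 𝓞 K₀, φ α * z + φ β = φ γ * z + φ δ → α = γ ∧ β = δ := by
    intro α β γ δ h
    have hαγ : α = γ := by
      by_contra hne
      apply hz
      have hne0 : algebraMap (𝓞 K₀) K₀ (α - γ) ≠ 0 := fun h0 =>
        hne (sub_eq_zero.mp (hcoeinj (by rw [h0, map_zero])))
      have hden : φ α - φ γ ≠ 0 := by
        rw [← map_sub, hφeq]
        intro h0
        exact hne0 ((algebraMap K₀ K).injective (h0.trans (map_zero _).symm))
      refine ⟨algebraMap (𝓞 K₀) K₀ (δ - β) / algebraMap (𝓞 K₀) K₀ (α - γ), ?_⟩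
      rw [map_div₀, ← hφeq, ← hφeq, map_sub, map_sub, div_eq_iff hden]
      linear_combination -h
    subst hαγ
    refine ⟨rfl, hφinj ?_⟩
    exact add_left_cancel h
  -- extraction of coefficients from p • bsp
  have hmemb : ∀ w ∈ p • bsp, ∃ α β, α ∈ p ∧ β ∈ p ∧ w = φ α * z + φ β := by
    intro w hw
    refine Submodule.smul_induction_on hw ?_ ?_
    · intro r hr n hn
      obtain ⟨c, d, hcd⟩ := Submodule.mem_span_pair.mp hn
      refine ⟨r * c, r * d, p.mul_mem_right _ hr, p.mul_mem_right _ hr, ?_⟩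
      rw [← hcd]
      simp only [Algebra.smul_def, hφdef, map_mul, smul_eq_mul]
      ring
    · rintro w1 w2 ⟨α1, β1, hα1, hβ1, rfl⟩ ⟨α2, β2, hα2, hβ2, rfl⟩
      refine ⟨α1 + α2, β1 + β2, add_mem hα1 hα2, add_mem hβ1 hβ2, ?_⟩
      rw [map_add, map_add]
      ring
  -- the conductor step
  have hkey : ∀ t : 𝓞 K, t ∈ Ideal.map f p → ∀ w ∈ bsp, φ x * ψ t * w ∈ p • bsp := by
    intro t ht
    have ht' : t ∈ p • (⊤ : Submodule (𝓞 K₀) (𝓞 K)) := by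
      rw [Ideal.smul_top_eq_map]
      exact ht
    refine Submodule.smul_induction_on ht' ?_ ?_
    · intro r hr y _ w hw
      have heq : φ x * ψ (r • y) * w = r • (φ x * ψ y * w) := by
        simp only [Algebra.smul_def, map_mul, hψf]
        rw [IsScalarTower.algebraMap_apply (𝓞 K₀) (𝓞 K) K r]
        ring
      rw [heq]
      exact Submodule.smul_mem_smul hr (hxmul y w hw)
    · intro y1 y2 h1 h2 w hw
      have heq : φ x * ψ (y1 + y2) * w = φ x * ψ y1 * w + φ x * ψ y2 * w := by
        rw [map_add]; ring
      rw [heq]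
      exact Submodule.add_mem _ (h1 w hw) (h2 w hw)
  -- main claim : θ - f u ∉ map f p
  have hmain : θ - f u ∉ Ideal.map f p := by
    intro hmem
    -- with w = 1
    obtain ⟨α, β, hα, hβ, hw⟩ := hmemb _ (hkey _ hmem 1 h1b)
    have eq1 : φ (x * A) * z + φ (-(x * u)) = φ α * z + φ β := by
      rw [← hw]
      simp only [map_mul, map_neg, map_sub, hψf, hψθ]
      ring
    obtain ⟨hXA, hXU⟩ := huniq _ _ _ _ eq1
    have hAp : A ∈ p := (hp.mem_or_mem (hXA ▸ hα)).resolve_left hxp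
    have hup : u ∈ p := by
      have hxu : x * u ∈ p := by
        have := hXU ▸ hβ
        exact (neg_mem_iff).mp this
      exact (hp.mem_or_mem hxu).resolve_left hxp
    -- with w = z
    obtain ⟨α2, β2, hα2, hβ2, hw2⟩ := hmemb _ (hkey _ hmem z hzb)
    have eq2 : φ (-(x * (B + u))) * z + φ (-(x * C)) = φ α2 * z + φ β2 := by
      rw [← hw2]
      simp only [map_mul, map_neg, map_sub, map_add, hψf, hψθ]
      linear_combination -φ x * hroot
    obtain ⟨hXB, hXC⟩ := huniq _ _ _ _ eq2
    have hBp : B ∈ p := by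
      have hxBu : x * (B + u) ∈ p := (neg_mem_iff).mp (hXB ▸ hα2)
      have hBu : B + u ∈ p := (hp.mem_or_mem hxBu).resolve_left hxp
      have := sub_mem hBu hup
      simpa using this
    have hCp : C ∈ p := by
      have hxC : x * C ∈ p := (neg_mem_iff).mp (hXC ▸ hβ2)
      exact (hp.mem_or_mem hxC).resolve_left hxp
    apply hgcd
    rw [Ideal.span_le]
    intro y hy
    simp only [Set.mem_insert_iff, Set.mem_singleton_iff] at hy
    rcases hy with rfl | rfl | rfl
    · exact hAp
    · exact hBp
    · exact hCp
  -- the two nearby elements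
  set a : 𝓞 K := θ - f u with hadef
  set v : 𝓞 K := θ + f u + f B with hvdef
  have hmapmem : ∀ c : 𝓞 K₀, c ∈ p → f c ∈ Ideal.map f p := fun c hc =>
    Ideal.mem_map_of_mem f hc
  have haP : a ∈ P := by
    have ha2 : a ^ 2 = -(f (B + 2 * u) * θ) - f (A * C - u ^ 2) +
        (θ ^ 2 + f B * θ + f (A * C)) := by
      simp only [hadef, map_add, map_mul, map_sub, map_pow, map_ofNat]
      ring
    have ha2mem : a ^ 2 ∈ Ideal.map f p := by
      rw [ha2, hθeq, add_zero]
      exact sub_mem (neg_mem (Ideal.mul_mem_right _ _ (hmapmem _ hu₁))) (hmapmem _ hu₂)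
    exact hP.mem_of_pow_mem 2 (Ideal.pow_le_self two_ne_zero (hPsq ▸ ha2mem))
  have haP2 : a ∉ P ^ 2 := by rw [← hPsq]; exact hmain
  have hvma : v - a = f (B + 2 * u) := by
    simp only [hvdef, hadef, map_add, map_mul, map_ofNat]
    ring
  have hvP : v ∈ P := by
    have : v = a + f (B + 2 * u) := by rw [← hvma]; ring
    rw [this]
    exact add_mem haP (Ideal.pow_le_self two_ne_zero (hPsq ▸ hmapmem _ hu₁))
  have hvP2 : v ∉ P ^ 2 := by
    intro hv
    apply haP2
    have : a = v - f (B + 2 * u) := by rw [← hvma]; ring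
    rw [this]
    exact sub_mem hv (hPsq ▸ hmapmem _ hu₁)
  have hPne : P ≠ ⊥ := by
    intro hPbot
    obtain ⟨c, hcp, hc0⟩ := Submodule.exists_mem_ne_zero_of_ne_bot hp0
    have : f c ∈ Ideal.map f p := hmapmem _ hcp
    rw [hPsq, hPbot] at this
    rw [← Ideal.zero_eq_bot, zero_pow two_ne_zero, Ideal.zero_eq_bot,
      Ideal.mem_bot] at this
    exact hc0 (hfinj (by rw [this, map_zero]))
  have hPprime : Prime P := Ideal.prime_of_isPrime hPne hP
  have hPne0 : P ≠ 0 := by rw [Ideal.zero_eq_bot]; exact hPne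
  -- first conclusion
  have main : u ^ 2 + B * u + A * C ∉ p ^ 2 := by
    intro hUu
    have hav : a * v = -(f (u ^ 2 + B * u + A * C)) +
        (θ ^ 2 + f B * θ + f (A * C)) := by
      simp only [hadef, hvdef, map_add, map_mul, map_pow]
      ring
    have havP4 : a * v ∈ P ^ 4 := by
      have h4 : f (u ^ 2 + B * u + A * C) ∈ P ^ 4 := by
        have := Ideal.mem_map_of_mem f hUu
        rw [Ideal.map_pow, hPsq, ← pow_mul] at this
        exact this
      rw [hav, hθeq, add_zero]
      exact neg_mem h4
    -- ideal-theoretic contradiction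
    have hdvd4 : P ^ 4 ∣ Ideal.span {a} * Ideal.span {v} := by
      rw [Ideal.dvd_iff_le, Ideal.span_singleton_mul_span_singleton,
        Ideal.span_singleton_le_iff_mem]
      exact havP4
    obtain ⟨a', ha'⟩ := Ideal.dvd_iff_le.mpr (Ideal.span_singleton_le_iff_mem P |>.mpr haP)
    obtain ⟨v', hv'⟩ := Ideal.dvd_iff_le.mpr (Ideal.span_singleton_le_iff_mem P |>.mpr hvP)
    have hPa' : ¬ P ∣ a' := by
      rintro ⟨c, rfl⟩
      apply haP2
      rw [← Ideal.span_singleton_le_iff_mem, Ideal.dvd_iff_le.symm]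
      exact ⟨c, by rw [ha']; ring⟩
    have hPv' : ¬ P ∣ v' := by
      rintro ⟨c, rfl⟩
      apply hvP2
      rw [← Ideal.span_singleton_le_iff_mem, Ideal.dvd_iff_le.symm]
      exact ⟨c, by rw [hv']; ring⟩
    have : P ^ 2 * P ^ 2 ∣ P ^ 2 * (a' * v') := by
      have : Ideal.span {a} * Ideal.span {v} = P ^ 2 * (a' * v') := by
        rw [ha', hv']; ring
      rw [← this]
      rw [show P ^ 2 * P ^ 2 = P ^ 4 by ring]
      exact hdvd4
    have hdvd2 : P ^ 2 ∣ a' * v' :=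
      (mul_dvd_mul_iff_left (pow_ne_zero 2 hPne0)).mp this
    have hdvd1 : P ∣ a' * v' := dvd_trans (dvd_pow_self P two_ne_zero) hdvd2
    rcases hPprime.dvd_mul.mp hdvd1 with h | h
    · exact hPa' h
    · exact hPv' h
  refine ⟨main, ?_⟩
  intro x0 hx0
  have hp2le : (p ^ 2 : Ideal (𝓞 K₀)) ≤ p := Ideal.pow_le_self two_ne_zero
  have h1 : (x0 - u) ^ 2 ∈ p := by
    have he : (x0 - u) ^ 2 = (x0 ^ 2 + B * x0 + A * C) - (B + 2 * u) * x0 -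
        (A * C - u ^ 2) := by ring
    rw [he]
    exact sub_mem (sub_mem (hp2le hx0) (p.mul_mem_right _ hu₁)) hu₂
  have h2' : x0 - u ∈ p := hp.mem_of_pow_mem 2 h1
  have h3 : x0 + u + B ∈ p := by
    have he : x0 + u + B = (x0 - u) + (B + 2 * u) := by ring
    rw [he]
    exact add_mem h2' hu₁
  apply main
  have he : u ^ 2 + B * u + A * C = (x0 ^ 2 + B * x0 + A * C) -
      (x0 - u) * (x0 + u + B) := by ring
  have hmul : (x0 - u) * (x0 + u + B) ∈ p ^ 2 := by
    rw [pow_two]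
    exact Ideal.mul_mem_mul h2' h3
  rw [he]
  exact sub_mem hx0 hmul
end

section
/- Let K₀ be a totally real field, K/K₀ a CM extension, O an order of K containing O_{K₀} with conductor f, and n an integral ideal of O_{K₀} coprime to f. Suppose z ∈ K \ K₀ is a root of a quadratic polynomial A X² + B X + C ∈ O_{K₀}[X] with gcd(A,B,C) coprime to n, A coprime to n, and n | C, such that z O_{K₀} + O_{K₀} has multiplier ring O. Then every prime ideal p of O_{K₀} dividing n is non-inert in K/K₀ (i.e., split or ramified), and if p is ramified in K/K₀ then v_p(n) = 1. -/
open NumberField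

-- Key auxiliary lemma: if Θ ∈ 𝓞 K has image A·z + t in K with t from 𝓞 K₀, then Θ is not
-- in the extension of p.
theorem key_not_mem
    (K₀ K : Type*) [Field K₀] [NumberField K₀] [Field K] [NumberField K] [Algebra K₀ K]
    (z : K) (hz : z ∉ (algebraMap K₀ K).range)
    (A : 𝓞 K₀) (n : Ideal (𝓞 K₀))
    (hcond : ∃ x : 𝓞 K₀, (∀ y : 𝓞 K,
        ∀ w ∈ Submodule.span (𝓞 K₀) ({z, 1} : Set K),
          (algebraMap (𝓞 K₀) K x * algebraMap (𝓞 K) K y) * w ∈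
            Submodule.span (𝓞 K₀) ({z, 1} : Set K)) ∧
      ∃ y ∈ n, x + y = 1)
    (hAn : Ideal.span {A} ⊔ n = ⊤)
    (p : Ideal (𝓞 K₀)) (hp : p.IsPrime) (hnp : n ≤ p)
    (t : 𝓞 K₀) (Θ : 𝓞 K)
    (hΘ : algebraMap (𝓞 K) K Θ = algebraMap (𝓞 K₀) K A * z + algebraMap (𝓞 K₀) K t) :
    Θ ∉ Ideal.map (algebraMap (𝓞 K₀) (𝓞 K)) p := by
  intro hmem
  obtain ⟨x, hxmul, y, hyn, hxy⟩ := hcond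
  have hxp : x ∉ p := by
    intro hxp
    exact hp.ne_top (Ideal.eq_top_iff_one p |>.2 (hxy ▸ add_mem hxp (hnp hyn)))
  have hcoe : ∀ a : 𝓞 K₀, algebraMap (𝓞 K) K (algebraMap (𝓞 K₀) (𝓞 K) a)
      = algebraMap (𝓞 K₀) K a := fun a =>
    (IsScalarTower.algebraMap_apply (𝓞 K₀) (𝓞 K) K a).symm
  have hone : (1 : K) ∈ Submodule.span (𝓞 K₀) ({z, 1} : Set K) :=
    Submodule.subset_span (by simp)
  -- main decomposition claim
  have main : ∀ u ∈ Ideal.map (algebraMap (𝓞 K₀) (𝓞 K)) p, ∀ y' : 𝓞 K,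
      ∃ c d : 𝓞 K₀, c ∈ p ∧ d ∈ p ∧
        algebraMap (𝓞 K₀) K x * algebraMap (𝓞 K) K (y' * u)
          = algebraMap (𝓞 K₀) K c * z + algebraMap (𝓞 K₀) K d := by
    intro u hu
    refine Submodule.span_induction ?_ ?_ ?_ ?_ hu
    · rintro _ ⟨a, ha, rfl⟩ y'
      have hb := hxmul y' 1 hone
      rw [mul_one] at hb
      obtain ⟨c', d', hcd⟩ := Submodule.mem_span_pair.mp hb
      refine ⟨a * c', a * d', Ideal.mul_mem_right _ p ha, Ideal.mul_mem_right _ p ha, ?_⟩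
      simp only [Algebra.smul_def, mul_one] at hcd
      rw [map_mul, hcoe, map_mul, map_mul]
      linear_combination (algebraMap (𝓞 K₀) K a) * hcd.symm
    · intro y'
      exact ⟨0, 0, zero_mem p, zero_mem p, by simp⟩
    · rintro u v _ _ ihu ihv y'
      obtain ⟨c1, d1, hc1, hd1, h1⟩ := ihu y'
      obtain ⟨c2, d2, hc2, hd2, h2⟩ := ihv y'
      refine ⟨c1 + c2, d1 + d2, add_mem hc1 hc2, add_mem hd1 hd2, ?_⟩
      rw [mul_add, map_add, map_add, map_add]
      linear_combination h1 + h2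
    · rintro r u _ ih y'
      obtain ⟨c, d, hc, hd, h⟩ := ih (y' * r)
      refine ⟨c, d, hc, hd, ?_⟩
      rw [smul_eq_mul, show y' * (r * u) = y' * r * u by ring]
      exact h
  obtain ⟨c, d, hc, hd, heq⟩ := main Θ hmem 1
  rw [one_mul, hΘ] at heq
  have key2 : algebraMap (𝓞 K₀) K (x * A - c) * z = algebraMap (𝓞 K₀) K (d - x * t) := by
    rw [map_sub, map_sub, map_mul, map_mul]
    linear_combination heq
  by_cases hxAc : x * A - c = 0
  · -- x*A = c ∈ p, so A ∈ p, contradiction with hAn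
    have hxA : x * A ∈ p := by
      exact (sub_eq_zero.mp hxAc) ▸ hc
    have hAp : A ∈ p := (hp.mem_or_mem hxA).resolve_left hxp
    have : (⊤ : Ideal (𝓞 K₀)) ≤ p := by
      rw [← hAn]
      exact sup_le ((Ideal.span_singleton_le_iff_mem p).2 hAp) hnp
    exact hp.ne_top (top_le_iff.mp this)
  · -- z would be in the image of K₀
    have hinj : Function.Injective (algebraMap (𝓞 K₀) K₀) := RingOfIntegers.coe_injective
    have hden : algebraMap (𝓞 K₀) K₀ (x * A - c) ≠ 0 := by
      intro h0
      exact hxAc (hinj (by rw [h0, map_zero]))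
    refine hz ⟨algebraMap (𝓞 K₀) K₀ (d - x * t) / algebraMap (𝓞 K₀) K₀ (x * A - c), ?_⟩
    rw [map_div₀]
    rw [← IsScalarTower.algebraMap_apply (𝓞 K₀) K₀ K,
      ← IsScalarTower.algebraMap_apply (𝓞 K₀) K₀ K]
    have hden' : algebraMap (𝓞 K₀) K (x * A - c) ≠ 0 := by
      rw [IsScalarTower.algebraMap_apply (𝓞 K₀) K₀ K]
      exact fun h => hden ((map_eq_zero (algebraMap K₀ K)).mp h)
    rw [div_eq_iff hden']
    linear_combination -key2

/-- Existence of quadratic polynomials with `n ∣ C`, implication (3) ⇒ (1).  If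
`z ∈ K \ K₀` is a root of `A X² + B X + C ∈ 𝓞 K₀[X]` with `(A, B, C)` coprime to
`n`, `A` coprime to `n` and `C ∈ n`, where `n` is coprime to the conductor of the
multiplier ring of `z 𝓞 K₀ + 𝓞 K₀`, then every prime `p ∣ n` is non-inert in
`K/K₀`, and if `p` is ramified then `v_p(n) = 1`. -/
theorem splitting_of_primes_dividing_n
    (K₀ K : Type*) [Field K₀] [NumberField K₀] [Field K] [NumberField K] [Algebra K₀ K]
    (htr : ∀ v : InfinitePlace K₀, v.IsReal)
    (hti : ∀ v : InfinitePlace K, v.IsComplex)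
    (h2 : Module.finrank K₀ K = 2)
    (z : K) (hz : z ∉ (algebraMap K₀ K).range)
    (A B C : 𝓞 K₀) (hA : A ≠ 0)
    (hroot : algebraMap (𝓞 K₀) K A * z ^ 2 + algebraMap (𝓞 K₀) K B * z +
      algebraMap (𝓞 K₀) K C = 0)
    (n : Ideal (𝓞 K₀)) (hn0 : n ≠ ⊥)
    -- `n` is coprime to the conductor of the multiplier ring `O` of `b = z 𝓞 K₀ + 𝓞 K₀`:
    (hcond : ∃ x : 𝓞 K₀, (∀ y : 𝓞 K,
        ∀ w ∈ Submodule.span (𝓞 K₀) ({z, 1} : Set K),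
          (algebraMap (𝓞 K₀) K x * algebraMap (𝓞 K) K y) * w ∈
            Submodule.span (𝓞 K₀) ({z, 1} : Set K)) ∧
      ∃ y ∈ n, x + y = 1)
    (hAn : Ideal.span {A} ⊔ n = ⊤)
    (hgcd : Ideal.span ({A, B, C} : Set (𝓞 K₀)) ⊔ n = ⊤)
    (hC : C ∈ n) :
    ∀ p : Ideal (𝓞 K₀), p.IsPrime → n ≤ p →
      ¬ (Ideal.map (algebraMap (𝓞 K₀) (𝓞 K)) p).IsPrime ∧
      ((∃ P : Ideal (𝓞 K), P.IsPrime ∧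
          Ideal.map (algebraMap (𝓞 K₀) (𝓞 K)) p = P ^ 2) → ¬ n ≤ p ^ 2) := by
  intro p hp hnp
  set f := algebraMap (𝓞 K₀) (𝓞 K) with hf
  have hcoe : ∀ a : 𝓞 K₀, algebraMap (𝓞 K) K (f a) = algebraMap (𝓞 K₀) K a := fun a =>
    (IsScalarTower.algebraMap_apply (𝓞 K₀) (𝓞 K) K a).symm
  -- integrality of A • z
  have hint0 : IsIntegral (𝓞 K₀) (algebraMap (𝓞 K₀) K A * z) := by
    refine ⟨Polynomial.X ^ 2 + Polynomial.C B * Polynomial.X + Polynomial.C (A * C), ?_, ?_⟩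
    · have hdeg : (Polynomial.C B * Polynomial.X + Polynomial.C (A * C)).degree < 2 :=
        lt_of_le_of_lt Polynomial.degree_linear_le (by norm_num)
      simpa [add_assoc] using Polynomial.monic_X_pow_add (n := 2) hdeg
    · simp only [Polynomial.eval₂_add, Polynomial.eval₂_mul, Polynomial.eval₂_pow,
        Polynomial.eval₂_X, Polynomial.eval₂_C, map_mul]
      linear_combination (algebraMap (𝓞 K₀) K A) * hroot
  have hint : IsIntegral ℤ (algebraMap (𝓞 K₀) K A * z) := isIntegral_trans _ hint0
  let Θ : 𝓞 K := ⟨algebraMap (𝓞 K₀) K A * z, hint⟩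
  have hΘ0 : algebraMap (𝓞 K) K Θ = algebraMap (𝓞 K₀) K A * z := rfl
  have hquad : Θ * (Θ + f B) = - f (A * C) := by
    apply RingOfIntegers.coe_injective
    rw [map_mul, map_add, map_neg, hΘ0, hcoe, hcoe, map_mul]
    linear_combination (algebraMap (𝓞 K₀) K A) * hroot
  have hkey0 : Θ ∉ Ideal.map f p :=
    key_not_mem K₀ K z hz A n hcond hAn p hp hnp 0 Θ (by rw [hΘ0, map_zero, add_zero])
  have hkeyB : Θ + f B ∉ Ideal.map f p :=
    key_not_mem K₀ K z hz A n hcond hAn p hp hnp B (Θ + f B)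
      (by rw [map_add, hΘ0, hcoe])
  constructor
  · intro hQ
    have hACp : f (A * C) ∈ Ideal.map f p :=
      Ideal.mem_map_of_mem f (Ideal.mul_mem_left p A (hnp hC))
    have hmem : Θ * (Θ + f B) ∈ Ideal.map f p := by rw [hquad]; exact neg_mem hACp
    rcases hQ.mem_or_mem hmem with h | h
    · exact hkey0 h
    · exact hkeyB h
  · rintro ⟨P, hP, hPe⟩ hn2
    have hpbot : p ≠ ⊥ := fun h => hn0 (le_bot_iff.mp (h ▸ hnp))
    have hmapbot : Ideal.map f p ≠ ⊥ := by
      obtain ⟨a, hap, ha0⟩ := Submodule.exists_mem_ne_zero_of_ne_bot hpbot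
      intro h
      have hfa : f a ∈ Ideal.map f p := Ideal.mem_map_of_mem f hap
      rw [h, Ideal.mem_bot] at hfa
      exact ha0 (RingOfIntegers.algebraMap.injective K₀ K (by rw [hfa, map_zero]))
    have hPbot : P ≠ ⊥ := by
      intro h
      rw [hPe, h, ← Ideal.zero_eq_bot] at hmapbot
      exact hmapbot (zero_pow (by norm_num))
    have hprime : Prime P := Ideal.prime_of_isPrime hPbot hP
    have hmem4 : Θ * (Θ + f B) ∈ P ^ 4 := by
      have hACp2 : f (A * C) ∈ Ideal.map f (p ^ 2) :=
        Ideal.mem_map_of_mem f (Ideal.mul_mem_left _ A (hn2 hC))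
      rw [Ideal.map_pow, hPe, ← pow_mul] at hACp2
      rw [hquad]
      exact neg_mem hACp2
    have hdvd4 : P ^ 4 ∣ Ideal.span {Θ} * Ideal.span {Θ + f B} := by
      rw [Ideal.span_singleton_mul_span_singleton, Ideal.dvd_span_singleton]
      exact hmem4
    have hnd1 : ¬ P ^ 2 ∣ Ideal.span {Θ} := by
      rw [Ideal.dvd_span_singleton, ← hPe]
      exact hkey0
    have hnd2 : ¬ P ^ 2 ∣ Ideal.span {Θ + f B} := by
      rw [Ideal.dvd_span_singleton, ← hPe]
      exact hkeyB
    have h4 : ((4 : ℕ) : ℕ∞) ≤ emultiplicity P (Ideal.span {Θ} * Ideal.span {Θ + f B}) :=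
      le_emultiplicity_of_pow_dvd hdvd4
    rw [emultiplicity_mul hprime] at h4
    have e1 : emultiplicity P (Ideal.span {Θ}) ≤ 1 := by
      by_contra h
      exact hnd1 (pow_dvd_of_le_emultiplicity
        (by exact_mod_cast Order.add_one_le_of_lt (not_le.mp h)))
    have e2 : emultiplicity P (Ideal.span {Θ + f B}) ≤ 1 := by
      by_contra h
      exact hnd2 (pow_dvd_of_le_emultiplicity
        (by exact_mod_cast Order.add_one_le_of_lt (not_le.mp h)))
    have : ((4 : ℕ) : ℕ∞) ≤ 2 := h4.trans ((add_le_add e1 e2).trans_eq one_add_one_eq_two)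
    norm_num at this
end
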